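/- arXiv:2507.13214 — 3 statements merged into one kernel-verified Lean document; each statement's English description precedes it below -/
import Mathlib

section
/- For every permutation w ∈ S_n and reduced pipe dreams P₁, P₂ ∈ PD(w), if P₁ ≤_chute P₂ then Φ(P₁) ≤ Φ(P₂) in the componentwise order on Lehmer tableaux. -/
open Classical

noncomputable section

/-- 1-based value of a permutation of `Fin n` at a 1-based position `j`. -/
def permVal {n : ℕ} (w : Equiv.Perm (Fin n)) (j : ℕ) : ℕ :=
  if h : 1 ≤ j ∧ j ≤ n then (w ⟨j - 1, by omega⟩ : ℕ) + 1 else 0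

/-- `(i,j)` is an inversion of `w`: `1 ≤ i < j ≤ n` and the (1-based) position of the
value `j` in the one-line notation of `w` precedes that of `i`. -/
def IsInv {n : ℕ} (w : Equiv.Perm (Fin n)) (i j : ℕ) : Prop :=
  1 ≤ i ∧ i < j ∧ j ≤ n ∧ permVal w.symm j < permVal w.symm i

/-- Lehmer form entry at box `(i,j)`: the number of `k ∈ [1, T(i,j)-1]` that do not
appear below box `(i,j)` in column `j`. -/
def lehmer (T : ℕ → ℕ → ℕ) (i j : ℕ) : ℕ :=
  ((Finset.Ico 1 (T i j)).filter fun k => ∀ i', 1 ≤ i' → i' < i → T i' j ≠ k).card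

/-- Incrementing box `(i,j)` of `T` yields `T'`:  with `a = T(i,j)` and `b` the smallest
integer greater than `a` not appearing below `(i,j)` in column `j`, either a pure
increment (if `b` is absent from column `j`) or a trade increment (swap `a` and `b`). -/
def IncrementAt (T T' : ℕ → ℕ → ℕ) (i j : ℕ) : Prop :=
  ∃ b, T i j < b ∧
    (∀ k, T i j < k → k < b → ∃ i', 1 ≤ i' ∧ i' < i ∧ T i' j = k) ∧
    (∀ i', 1 ≤ i' → i' < i → T i' j ≠ b) ∧
    (((∀ i', 1 ≤ i' → T i' j ≠ b) ∧
        T' = fun a c => if a = i ∧ c = j then b else T a c) ∨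
      (∃ i'', i < i'' ∧ T i'' j = b ∧
        T' = fun a c =>
          if a = i ∧ c = j then b else if a = i'' ∧ c = j then T i j else T a c))

/-- `IncBy M T T'`: `T'` is obtained from `T` by incrementing each box of the
multiset `M` (with multiplicity). -/
inductive IncBy : Multiset (ℕ × ℕ) → (ℕ → ℕ → ℕ) → (ℕ → ℕ → ℕ) → Prop
  | nil (T : ℕ → ℕ → ℕ) : IncBy 0 T T
  | cons {M : Multiset (ℕ × ℕ)} {T T' T'' : ℕ → ℕ → ℕ} {i j : ℕ} :
      IncrementAt T T' i j → IncBy M T' T'' → IncBy ((i, j) ::ₘ M) T T''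

/-- Column-injective tableau for `w`: a box has a nonzero entry iff it is an inversion
of `w`, and the nonzero entries in each column are distinct. -/
def ColInj {n : ℕ} (w : Equiv.Perm (Fin n)) (T : ℕ → ℕ → ℕ) : Prop :=
  (∀ i j, T i j ≠ 0 ↔ IsInv w i j) ∧
  ∀ i i' j, 1 ≤ i → i < i' → i' < j → T i j ≠ 0 → T i' j ≠ 0 → T i j ≠ T i' j

/-- The Λ-shape `Λ(i,j,k)` is balanced in `T`. -/
def LBal (T : ℕ → ℕ → ℕ) (i j k : ℕ) : Prop :=
  min (T i j) (T j k) ≤ T i k ∧ T i k ≤ max (T i j) (T j k)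

/-- Every Λ-shape of `Δ_{n-1}` is balanced in `T`. -/
def BalancedTab (n : ℕ) (T : ℕ → ℕ → ℕ) : Prop :=
  ∀ i j k, 1 ≤ i → i < j → j < k → k ≤ n → LBal T i j k

/-- Inversions tableau for `w`: balanced column-injective tableau whose entries in
row `i` are at most `i`. -/
def InvTab {n : ℕ} (w : Equiv.Perm (Fin n)) (T : ℕ → ℕ → ℕ) : Prop :=
  ColInj w T ∧ BalancedTab n T ∧ ∀ i j, T i j ≤ i

/-- The multiset of entries of `T` on `hook(i,k)`. -/
def hookEntries (T : ℕ → ℕ → ℕ) (i k : ℕ) : Multiset ℕ :=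
  (T i k ::ₘ (Finset.Ioo i k).val.map fun r => T r k) +
    (Finset.Ioo i k).val.map fun c => T i c

/-- The median ((k-i)-th smallest of the `2(k-i)-1` entries) of the hook of `(i,k)`. -/
def hookMedian (T : ℕ → ℕ → ℕ) (i k : ℕ) : ℕ :=
  ((hookEntries T i k).sort (· ≤ ·)).getD (k - i - 1) 0

/-! ## Pipe dreams

A pipe dream in the staircase `Δ_n` is encoded by `P : ℕ → ℕ → Bool`, where
`P i j = true` means box `(i,j)` (row `i` from the top, column `j` from the left,
with `1 ≤ i, j` and `i + j ≤ n`) is a cross tile, and `false` means a bump tile;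
boxes on the southeast boundary (`i + j = n + 1`) are elbow tiles. -/

/-- `labels n P i j` is the pair (label of the north edge, label of the east edge) of
the pipes passing through box `(i,j)`:  pipes enter at row `k` on the west side with
label `k` and propagate through cross, bump and elbow tiles. -/
def labels (n : ℕ) (P : ℕ → ℕ → Bool) (i j : ℕ) : ℕ × ℕ :=
  let west := if _h1 : j ≤ 1 then i else (labels n P i (j - 1)).2
  if _h : i + j ≤ n then
    if P i j then ((labels n P (i + 1) j).1, west)
    else (west, (labels n P (i + 1) j).1)
  else (west, west)
termination_by (n + 1 - i) + j
decreasing_by all_goals omega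

def northLabel (n : ℕ) (P : ℕ → ℕ → Bool) (i j : ℕ) : ℕ := (labels n P i j).1

def westLabel (n : ℕ) (P : ℕ → ℕ → Bool) (i j : ℕ) : ℕ :=
  if j ≤ 1 then i else (labels n P i (j - 1)).2

def southLabel (n : ℕ) (P : ℕ → ℕ → Bool) (i j : ℕ) : ℕ := (labels n P (i + 1) j).1

/-- Pipes `p` and `q` cross at box `(i,j)` of `P`. -/
def CrossAt (n : ℕ) (P : ℕ → ℕ → Bool) (i j p q : ℕ) : Prop :=
  1 ≤ i ∧ 1 ≤ j ∧ i + j ≤ n ∧ P i j = true ∧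
    ((westLabel n P i j = p ∧ southLabel n P i j = q) ∨
      (westLabel n P i j = q ∧ southLabel n P i j = p))

/-- `P` is a pipe dream for `w`: crosses lie in the staircase, and reading the pipe
labels along the north side gives the one-line notation of `w`. -/
def IsPD {n : ℕ} (w : Equiv.Perm (Fin n)) (P : ℕ → ℕ → Bool) : Prop :=
  (∀ i j, P i j = true → 1 ≤ i ∧ 1 ≤ j ∧ i + j ≤ n) ∧
    ∀ j, 1 ≤ j → j ≤ n → northLabel n P 1 j = permVal w j

/-- `P` is reduced: no two pipes cross more than once. -/
def Reduced (n : ℕ) (P : ℕ → ℕ → Bool) : Prop :=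
  ∀ p q i j i' j', CrossAt n P i j p q → CrossAt n P i' j' p q → i = i' ∧ j = j'

/-- The set of reduced pipe dreams for `w`. -/
def RPD {n : ℕ} (w : Equiv.Perm (Fin n)) :=
  { P : ℕ → ℕ → Bool // IsPD w P ∧ Reduced n P }

/-- `R` is a rectangle (rows `a < b`, columns `c < d`) in which a chute move of `P`
can take place: `NW(R)=(a,c)` and `SW(R)=(b,c)` are bumps, `SE(R)=(b,d)` is a bump or
elbow, and all other boxes of `R` are crosses. -/
def IsChuteRect (n : ℕ) (P : ℕ → ℕ → Bool) (a b c d : ℕ) : Prop :=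
  1 ≤ a ∧ a < b ∧ 1 ≤ c ∧ c < d ∧ b + d ≤ n + 1 ∧
    P a c = false ∧ P b c = false ∧ P b d = false ∧
    ∀ i j, a ≤ i → i ≤ b → c ≤ j → j ≤ d →
      ¬(i = a ∧ j = c) → ¬(i = b ∧ j = c) → ¬(i = b ∧ j = d) → P i j = true

/-- The result of the chute move in the rectangle with corners `(a,c)`, `(b,d)`:
the bump at `SW=(b,c)` becomes a cross and the cross at `NE=(a,d)` becomes a bump. -/
def chuteResult (P : ℕ → ℕ → Bool) (a b c d : ℕ) : ℕ → ℕ → Bool :=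
  fun i j => if i = b ∧ j = c then true else if i = a ∧ j = d then false else P i j

/-- `P'` is obtained from `P` by a single chute move. -/
def ChuteStep (n : ℕ) (P P' : ℕ → ℕ → Bool) : Prop :=
  ∃ a b c d, IsChuteRect n P a b c d ∧ P' = chuteResult P a b c d

/-- The chute move order on `RPD w`: `P ≤ Q` iff `Q` is obtained from `P`
by a sequence of chute moves. -/
def chuteLE {n : ℕ} (w : Equiv.Perm (Fin n)) (P Q : RPD w) : Prop :=
  Relation.ReflTransGen (fun X Y : RPD w => ChuteStep n X.1 Y.1) P Q

/-- `theta n P p q` is the index of the row in which pipes `p` and `q` cross in `P`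
(`0` if they do not cross).  For `P ∈ PD(w)` reduced, `theta n P` is the inversions
tableau `Θ(P)`. -/
def theta (n : ℕ) (P : ℕ → ℕ → Bool) (p q : ℕ) : ℕ :=
  if h : ∃ rc : ℕ × ℕ, CrossAt n P rc.1 rc.2 p q then (Classical.choose h).1 else 0

/-- The Lehmer tableau `Φ(P) = Λ(Θ(P))` of a pipe dream. -/
def phi (n : ℕ) (P : ℕ → ℕ → Bool) (i j : ℕ) : ℕ := lehmer (theta n P) i j

/-- Cover relation of the chute move order. -/
def chuteCovBy {n : ℕ} (w : Equiv.Perm (Fin n)) (P Q : RPD w) : Prop :=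
  chuteLE w P Q ∧ P ≠ Q ∧ ∀ R, chuteLE w P R → chuteLE w R Q → R = P ∨ R = Q

/-- The interval `[P, Q]` in the chute move order. -/
def chuteIcc {n : ℕ} (w : Equiv.Perm (Fin n)) (P Q : RPD w) : Set (RPD w) :=
  { R | chuteLE w P R ∧ chuteLE w R Q }

/-- A chain in the chute move order. -/
def chuteChain {n : ℕ} (w : Equiv.Perm (Fin n)) (C : Set (RPD w)) : Prop :=
  ∀ x ∈ C, ∀ y ∈ C, chuteLE w x y ∨ chuteLE w y x

/-- `[P,Q]` is a polygon: an interval of cardinality at least 4 that is the union of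
two chains whose intersection is `{P, Q}`. -/
def IsPolygon {n : ℕ} (w : Equiv.Perm (Fin n)) (P Q : RPD w) : Prop :=
  chuteLE w P Q ∧ 4 ≤ (chuteIcc w P Q).ncard ∧
    ∃ C₁ C₂ : Set (RPD w), chuteChain w C₁ ∧ chuteChain w C₂ ∧
      C₁ ∪ C₂ = chuteIcc w P Q ∧ C₁ ∩ C₂ = {P, Q}

/-- `m` is the meet (greatest lower bound) of `P` and `Q` in the chute move order. -/
def IsMeetOf {n : ℕ} (w : Equiv.Perm (Fin n)) (m P Q : RPD w) : Prop :=
  chuteLE w m P ∧ chuteLE w m Q ∧ ∀ r, chuteLE w r P → chuteLE w r Q → chuteLE w r m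

/-- `s` is the join (least upper bound) of `P` and `Q` in the chute move order. -/
def IsJoinOf {n : ℕ} (w : Equiv.Perm (Fin n)) (s P Q : RPD w) : Prop :=
  chuteLE w P s ∧ chuteLE w Q s ∧ ∀ r, chuteLE w P r → chuteLE w Q r → chuteLE w s r



/-! ### Auxiliary development -/

def eastLabel (n : ℕ) (P : ℕ → ℕ → Bool) (i j : ℕ) : ℕ := (labels n P i j).2
variable {n : ℕ} {P : ℕ → ℕ → Bool}
theorem labels_eq (i j : ℕ) : labels n P i j =
    if i + j ≤ n then
      (if P i j then (southLabel n P i j, westLabel n P i j)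
       else (westLabel n P i j, southLabel n P i j))
    else (westLabel n P i j, westLabel n P i j) := by
  rw [labels]; simp only [westLabel, southLabel]; split <;> rfl
theorem west_one (i : ℕ) : westLabel n P i 1 = i := by simp [westLabel]
theorem west_succ (i j : ℕ) (h : 1 ≤ j) : westLabel n P i (j+1) = eastLabel n P i j := by
  simp [westLabel, eastLabel]; omega
theorem north_out (i j : ℕ) (h : ¬ (i + j ≤ n)) :
    northLabel n P i j = westLabel n P i j := by
  rw [northLabel, labels_eq]; simp [h]
theorem south_eq_north (i j : ℕ) : southLabel n P i j = northLabel n P (i+1) j := rfl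
theorem conserve (i j : ℕ) (h : i + j ≤ n) :
    ({northLabel n P i j, eastLabel n P i j} : Multiset ℕ)
      = {westLabel n P i j, southLabel n P i j} := by
  rw [northLabel, eastLabel, labels_eq]
  by_cases hc : P i j <;> simp [h, hc]
  exact Multiset.cons_swap _ _ _


theorem msing (a : ℕ) (s : Multiset ℕ) : s + {a} = a ::ₘ s := by
  rw [add_comm, Multiset.singleton_add]

theorem cons2 {a b cc dd : ℕ} (M : Multiset ℕ) (h : ({a,b} : Multiset ℕ) = {cc,dd}) :
    a ::ₘ b ::ₘ M = cc ::ₘ dd ::ₘ M := by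
  have h2 : ({a,b} : Multiset ℕ) + M = ({cc,dd} : Multiset ℕ) + M := by rw [h]
  simpa [Multiset.cons_add] using h2


theorem north_cross (i j : ℕ) (h : i + j ≤ n) (hc : P i j = true) :
    northLabel n P i j = southLabel n P i j := by
  rw [northLabel, labels_eq]; simp [h, hc]

theorem east_cross (i j : ℕ) (h : i + j ≤ n) (hc : P i j = true) :
    eastLabel n P i j = westLabel n P i j := by
  rw [eastLabel, labels_eq]; simp [h, hc]

theorem north_bump (i j : ℕ) (h : i + j ≤ n) (hc : P i j = false) :
    northLabel n P i j = westLabel n P i j := by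
  rw [northLabel, labels_eq]; simp [h, hc]

theorem east_bump (i j : ℕ) (h : i + j ≤ n) (hc : P i j = false) :
    eastLabel n P i j = southLabel n P i j := by
  rw [eastLabel, labels_eq]; simp [h, hc]


-- label ≥ row
theorem row_le_labels (i j : ℕ) : i ≤ (labels n P i j).1 ∧ i ≤ (labels n P i j).2 := by
  have H : ∀ k i j, (n + 1 - i) + j = k → i ≤ (labels n P i j).1 ∧ i ≤ (labels n P i j).2 := by
    intro k
    induction k using Nat.strong_induction_on with
    | _ k IH =>
    intro i j hk
    have IH' : ∀ k', k' < k → ∀ i j, (n+1-i)+j = k' → i ≤ (labels n P i j).1 ∧ i ≤ (labels n P i j).2 := IH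
    clear IH
    have hwest : i ≤ westLabel n P i j := by
      rw [westLabel]
      split
      · exact le_refl i
      · next hj => exact ((IH' _ (by omega) i (j-1) rfl).2)
    rw [labels_eq]
    split
    · next hin =>
      have hs : i ≤ southLabel n P i j := by
        have := (IH' ((n+1-(i+1)) + j) (by omega) (i+1) j rfl).1
        rw [southLabel]; omega
      split <;> exact ⟨by assumption, by assumption⟩
    · exact ⟨hwest, hwest⟩
  exact H _ i j rfl

theorem row_le_west (i j : ℕ) : i ≤ westLabel n P i j := by
  rw [westLabel]; split
  · exact le_refl i
  · exact (row_le_labels i (j-1)).2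

theorem row_lt_south (i j : ℕ) : i < southLabel n P i j := by
  have := (row_le_labels (n := n) (P := P) (i+1) j).1
  rw [southLabel]; omega

/-- west labels of column `j`, rows `n+1-j` (bottom) up, `k` of them. -/
def Wcol (n : ℕ) (P : ℕ → ℕ → Bool) (j k : ℕ) : Multiset ℕ :=
  (Multiset.range k).map (fun s => westLabel n P (n+1-j-s) j)

/-- north labels out the top boundary, columns `1..m`. -/
def Ntop (n : ℕ) (P : ℕ → ℕ → Bool) (m : ℕ) : Multiset ℕ :=
  (Multiset.range m).map (fun s => northLabel n P 1 (s+1))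

theorem wcol_telescope (j : ℕ) (hj : 1 ≤ j) (hjn : j ≤ n) :
    ∀ k, k ≤ n - j → Wcol n P j (k+1) =
      northLabel n P (n+1-j-k) j ::ₘ
        (Multiset.range k).map (fun s => eastLabel n P (n-j-s) j) := by
  intro k
  induction k with
  | zero =>
    intro _
    show Wcol n P j 1 = _
    rw [Wcol]
    simp only [Multiset.range_succ, Multiset.range_zero, Multiset.map_cons,
      Multiset.map_zero]
    rw [north_out (n+1-j-0) j (by omega)]
  | succ k IH =>
    intro hk
    have hk' : k ≤ n - j := by omega
    set t := n - j - k with ht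
    have h1 : n + 1 - j - (k+1) = t := by omega
    have h2 : n + 1 - j - k = t + 1 := by omega
    have htj : t + j ≤ n := by omega
    have hcons := conserve (n := n) (P := P) t j htj
    calc Wcol n P j (k+2)
        = westLabel n P t j ::ₘ Wcol n P j (k+1) := by
          rw [Wcol, Wcol, Multiset.range_succ, Multiset.map_cons, h1]
      _ = westLabel n P t j ::ₘ southLabel n P t j ::ₘ
            (Multiset.range k).map (fun s => eastLabel n P (n-j-s) j) := by
          rw [IH hk', h2, south_eq_north]
      _ = ({westLabel n P t j, southLabel n P t j} : Multiset ℕ) +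
            (Multiset.range k).map (fun s => eastLabel n P (n-j-s) j) := by
          rfl
      _ = ({northLabel n P t j, eastLabel n P t j} : Multiset ℕ) +
            (Multiset.range k).map (fun s => eastLabel n P (n-j-s) j) := by rw [hcons]
      _ = northLabel n P t j ::ₘ eastLabel n P t j ::ₘ
            (Multiset.range k).map (fun s => eastLabel n P (n-j-s) j) := rfl
      _ = _ := by
          rw [Multiset.range_succ, Multiset.map_cons, h1]

theorem wcol_step (j : ℕ) (hj : 1 ≤ j) (hjn : j ≤ n) :
    Wcol n P j (n+1-j) = northLabel n P 1 j ::ₘ Wcol n P (j+1) (n-j) := by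
  have h0 : n + 1 - j = (n - j) + 1 := by omega
  rw [h0, wcol_telescope j hj hjn (n-j) le_rfl]
  have h1 : n + 1 - j - (n - j) = 1 := by omega
  rw [h1]
  congr 1
  rw [Wcol]
  apply Multiset.map_congr
  · rfl
  · intro s hs
    rw [Multiset.mem_range] at hs
    have h2 : n + 1 - (j+1) - s = n - j - s := by omega
    rw [h2, west_succ _ j hj]

theorem wcol_inv (j : ℕ) (hj : 1 ≤ j) (hjn : j ≤ n + 1) :
    Wcol n P j (n+1-j) + Ntop n P (j-1) = Wcol n P 1 n := by
  induction j with
  | zero => omega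
  | succ j IH =>
    rcases Nat.eq_or_lt_of_le hj with h1 | h1
    · simp [← h1, Ntop]
    · have hj1 : 1 ≤ j := by omega
      have hjn' : j ≤ n := by omega
      rw [← IH hj1 (by omega), wcol_step j hj1 hjn']
      have : Ntop n P (j+1-1) = northLabel n P 1 j ::ₘ Ntop n P (j-1) := by
        have h2 : j + 1 - 1 = (j-1) + 1 := by omega
        rw [h2, Ntop, Multiset.range_succ, Multiset.map_cons]
        have h3 : j - 1 + 1 = j := by omega
        rw [h3]; rfl
      rw [this]
      have h4 : n + 1 - (j+1) = n - j := by omega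
      rw [h4]
      simp only [Multiset.cons_add, Multiset.add_cons]

theorem wcol_one : Wcol n P 1 n = (Multiset.range n).map (fun s => n - s) := by
  rw [Wcol]
  apply Multiset.map_congr rfl
  intro s hs
  rw [Multiset.mem_range] at hs
  have : n + 1 - 1 - s = n - s := by omega
  rw [this, west_one]

theorem wcol_one_nodup : (Wcol n P 1 n).Nodup := by
  rw [wcol_one]
  apply Multiset.Nodup.map_on _ (Multiset.nodup_range n)
  intro x hx y hy h
  rw [Multiset.mem_range] at hx hy
  omega

theorem wcol_nodup (j : ℕ) (hj : 1 ≤ j) (hjn : j ≤ n + 1) :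
    ((Wcol n P j (n+1-j)) + Ntop n P (j-1)).Nodup := by
  rw [wcol_inv j hj hjn]; exact wcol_one_nodup

theorem west_inj (j u v : ℕ) (hj : 1 ≤ j) (hu : 1 ≤ u) (hun : u + j ≤ n + 1)
    (hv : 1 ≤ v) (hvn : v + j ≤ n + 1) (h : westLabel n P u j = westLabel n P v j) :
    u = v := by
  have hjn : j ≤ n + 1 := by omega
  have hnd : (Wcol n P j (n+1-j)).Nodup :=
    Multiset.nodup_of_le (Multiset.le_add_right _ _) (wcol_nodup j hj hjn)
  rw [Wcol] at hnd
  have h2 : n + 1 - j - (n+1-j-u) = u := by omega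
  have h3 : n + 1 - j - (n+1-j-v) = v := by omega
  have key := Multiset.inj_on_of_nodup_map hnd (n+1-j-u)
    (Multiset.mem_range.2 (show n+1-j-u < n+1-j by omega)) (n+1-j-v)
    (Multiset.mem_range.2 (show n+1-j-v < n+1-j by omega))
    (by rw [h2, h3]; exact h)
  omega

theorem west_mem_bounds (j u : ℕ) (hj : 1 ≤ j) (hu : 1 ≤ u) (hun : u + j ≤ n + 1) :
    1 ≤ westLabel n P u j ∧ westLabel n P u j ≤ n := by
  have hmem : westLabel n P u j ∈ Wcol n P j (n+1-j) := by
    rw [Wcol, Multiset.mem_map]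
    exact ⟨n+1-j-u, by rw [Multiset.mem_range]; omega, by congr 1; omega⟩
  have hmem2 : westLabel n P u j ∈ Wcol n P 1 n := by
    rw [← wcol_inv j hj (by omega)]
    exact Multiset.mem_add.2 (Or.inl hmem)
  rw [wcol_one, Multiset.mem_map] at hmem2
  obtain ⟨s, hs, hval⟩ := hmem2
  rw [Multiset.mem_range] at hs
  omega

theorem no_exit (c j u x : ℕ) (hc : 1 ≤ c) (hcj : c < j) (hu : 1 ≤ u)
    (hun : u + j ≤ n + 1) (hx : northLabel n P 1 c = x) (hw : westLabel n P u j = x) :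
    False := by
  have hjn : j ≤ n + 1 := by omega
  have hnd := wcol_nodup (n := n) (P := P) j (by omega) hjn
  rw [Multiset.nodup_add] at hnd
  have h1 : x ∈ Wcol n P j (n+1-j) := by
    rw [Wcol, Multiset.mem_map]
    exact ⟨n+1-j-u, by rw [Multiset.mem_range]; omega, by rw [show n+1-j-(n+1-j-u) = u by omega]; exact hw⟩
  have h2 : x ∈ Ntop n P (j-1) := by
    rw [Ntop, Multiset.mem_map]
    exact ⟨c-1, by rw [Multiset.mem_range]; omega, by rw [show c-1+1 = c by omega]; exact hx⟩
  exact Multiset.disjoint_left.1 hnd.2.2 h1 h2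

/-- north labels of row `i`, columns `1..k`. -/
def Nrow (n : ℕ) (P : ℕ → ℕ → Bool) (i k : ℕ) : Multiset ℕ :=
  (Multiset.range k).map (fun s => northLabel n P i (s+1))

theorem nrow_telescope (i : ℕ) :
    ∀ m, 1 ≤ m → m + i ≤ n → Nrow n P i m + {eastLabel n P i m} =
      i ::ₘ (Multiset.range m).map (fun s => southLabel n P i (s+1)) := by
  intro m
  induction m with
  | zero => omega
  | succ m IH =>
    intro _ hm
    rcases Nat.eq_zero_or_pos m with hm0 | hm0
    · subst hm0
      have hc := conserve (n := n) (P := P) i 1 (by omega)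
      have hc2 : ({northLabel n P i 1, eastLabel n P i 1} : Multiset ℕ)
          = {i, southLabel n P i 1} := by rw [hc, west_one]
      show (northLabel n P i 1 ::ₘ 0) + {eastLabel n P i 1}
          = i ::ₘ southLabel n P i 1 ::ₘ 0
      rw [msing, Multiset.cons_swap]
      exact cons2 0 hc2
    · have hc := conserve (n := n) (P := P) i (m+1) (by omega)
      have hwm : westLabel n P i (m+1) = eastLabel n P i m := west_succ i m hm0
      have IH' := IH hm0 (by omega)
      rw [Nrow, msing] at IH'
      rw [Nrow, Multiset.range_succ, Multiset.map_cons, msing, Multiset.cons_swap]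
      rw [cons2 _ hc, hwm, Multiset.cons_swap, IH',
        Multiset.cons_swap, Multiset.map_cons]

theorem nrow_step (i : ℕ) (hi : 1 ≤ i) (hin : i ≤ n - 1) :
    Nrow n P i (n+1-i) = i ::ₘ Nrow n P (i+1) (n-i) := by
  have h1 : n + 1 - i = (n - i) + 1 := by omega
  have h2 : Nrow n P i ((n-i)+1) = Nrow n P i (n-i) + {northLabel n P i (n-i+1)} := by
    rw [Nrow, Nrow, Multiset.range_succ, Multiset.map_cons, msing]
  have h3 : northLabel n P i (n-i+1) = eastLabel n P i (n-i) := by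
    rw [north_out _ _ (by omega), west_succ _ _ (by omega)]
  have h4 := nrow_telescope (n := n) (P := P) i (n-i) (by omega) (by omega)
  rw [h1, h2, h3, h4]
  have h5 : (Multiset.range (n-i)).map (fun s => southLabel n P i (s+1))
      = Nrow n P (i+1) (n-i) := by
    rw [Nrow]; rfl
  rw [h5]

theorem nrow_good : ∀ t i, 1 ≤ i → i = n - t → 1 ≤ n →
    (Nrow n P i (n+1-i)).Nodup ∧ ∀ x ∈ Nrow n P i (n+1-i), i ≤ x := by
  intro t
  induction t with
  | zero =>
    intro i hi hit hn
    have hin : i = n := by omega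
    have h1 : n + 1 - i = 1 := by omega
    rw [h1, Nrow]
    simp only [Multiset.range_succ, Multiset.range_zero, Multiset.map_cons,
      Multiset.map_zero, Nat.zero_add]
    constructor
    · simp
    · intro x hx
      simp only [Multiset.mem_cons, Multiset.notMem_zero, or_false] at hx
      subst hx
      rw [north_out _ _ (by omega), west_one]
  | succ t IH =>
    intro i hi hit hn
    rcases Nat.lt_or_ge i (n - t) with h | h
    · -- i = n - (t+1) < n - t, so i ≤ n-1 and i+1 = n-t
      have hi1 : i + 1 = n - t := by omega
      have hrec := IH (i+1) (by omega) (by omega) hn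
      rw [show n + 1 - (i+1) = n - i by omega] at hrec
      rw [nrow_step i hi (by omega)]
      obtain ⟨hnd, hbd⟩ := hrec
      constructor
      · rw [Multiset.nodup_cons]
        refine ⟨fun hmem => ?_, hnd⟩
        have := hbd i hmem
        omega
      · intro x hx
        rcases Multiset.mem_cons.1 hx with h | h
        · omega
        · have := hbd x h; omega
    · exact IH i hi (by omega) hn

theorem north_inj_row (i y y' : ℕ) (hi : 1 ≤ i) (hin : i ≤ n) (hy : 1 ≤ y)
    (hyn : y ≤ n + 1 - i) (hy' : 1 ≤ y') (hy'n : y' ≤ n + 1 - i)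
    (h : northLabel n P i y = northLabel n P i y') : y = y' := by
  have := (nrow_good (n := n) (P := P) (n - i) i hi (by omega) (by omega)).1
  rw [Nrow] at this
  have key := Multiset.inj_on_of_nodup_map this (y-1)
    (Multiset.mem_range.2 (by omega)) (y'-1)
    (Multiset.mem_range.2 (by omega))
    (by rw [show y-1+1 = y by omega, show y'-1+1 = y' by omega]; exact h)
  omega
end

section
variable {n : ℕ} {P : ℕ → ℕ → Bool}

theorem down (j : ℕ) : ∀ t r, 1 ≤ r → r + j ≤ n + 1 → n + 1 - j - r = t →
    ∃ v, r ≤ v ∧ v + j ≤ n + 1 ∧ westLabel n P v j = northLabel n P r j := by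
  intro t
  induction t with
  | zero =>
    intro r h1 h2 h3
    have hb : ¬ (r + j ≤ n) := by omega
    exact ⟨r, le_rfl, h2, (north_out _ _ hb).symm⟩
  | succ t IH =>
    intro r h1 h2 h3
    have hrj : r + j ≤ n := by omega
    by_cases hc : P r j
    · have heq : northLabel n P r j = northLabel n P (r+1) j := by
        rw [north_cross _ _ hrj hc, south_eq_north]
      obtain ⟨v, hv1, hv2, hv3⟩ := IH (r+1) (by omega) (by omega) (by omega)
      exact ⟨v, by omega, hv2, by rw [hv3, ← heq]⟩
    · exact ⟨r, le_rfl, h2,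
        (north_bump _ _ hrj (by simpa using hc)).symm⟩

theorem climb (j : ℕ) (hj : 1 ≤ j) : ∀ r q, 1 ≤ r → r + j ≤ n + 1 →
    northLabel n P r j = q →
    (northLabel n P 1 j = q ∧
      ∀ i, 1 ≤ i → i < r → (P i j = true ∧ southLabel n P i j = q)) ∨
    (∃ e, 1 ≤ e ∧ e < r ∧ P e j = false ∧ southLabel n P e j = q ∧
      westLabel n P e (j+1) = q ∧
      ∀ i, e < i → i < r → (P i j = true ∧ southLabel n P i j = q)) := by
  intro r
  induction r with
  | zero => intro q h1; omega
  | succ r IH =>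
    intro q h1 h2 h3
    rcases Nat.eq_zero_or_pos r with hr0 | hr0
    · subst hr0
      exact Or.inl ⟨h3, fun i hi1 hi2 => by omega⟩
    · have hrj : r + j ≤ n := by omega
      have hsq : southLabel n P r j = q := by rw [south_eq_north, h3]
      by_cases hc : P r j
      · have hnr : northLabel n P r j = q := by rw [north_cross _ _ hrj hc, hsq]
        rcases IH q (by omega) (by omega) hnr with ⟨h4, h5⟩ | ⟨e, he1, he2, he3, he4, he5, he6⟩
        · refine Or.inl ⟨h4, fun i hi1 hi2 => ?_⟩
          rcases Nat.lt_or_ge i r with h | h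
          · exact h5 i hi1 h
          · have : i = r := by omega
            subst this; exact ⟨hc, hsq⟩
        · refine Or.inr ⟨e, he1, by omega, he3, he4, he5, fun i hi1 hi2 => ?_⟩
          rcases Nat.lt_or_ge i r with h | h
          · exact he6 i hi1 h
          · have : i = r := by omega
            subst this; exact ⟨hc, hsq⟩
      · have hPf : P r j = false := by simpa using hc
        refine Or.inr ⟨r, hr0, by omega, hPf, hsq, ?_, fun i hi1 hi2 => by omega⟩
        rw [west_succ _ _ hj, east_bump _ _ hrj hPf, hsq]

theorem exitLemma (j v y : ℕ) (hj : 1 ≤ j) (hv : 1 ≤ v) (hvn : v + j ≤ n + 1)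
    (hw : westLabel n P v j = y) :
    (P v j = true ∧ v + j ≤ n ∧ westLabel n P v (j+1) = y) ∨
    ((v + j ≤ n → P v j = false) ∧
      ∃ e, 1 ≤ e ∧ e < v ∧ P e j = false ∧ southLabel n P e j = y ∧
      westLabel n P e (j+1) = y ∧
      ∀ i, e < i → i < v → (P i j = true ∧ southLabel n P i j = y)) ∨
    ((v + j ≤ n → P v j = false) ∧ northLabel n P 1 j = y ∧
      ∀ i, 1 ≤ i → i < v → (P i j = true ∧ southLabel n P i j = y)) := by
  by_cases hin : v + j ≤ n
  · by_cases hc : P v j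
    · exact Or.inl ⟨hc, hin, by rw [west_succ _ _ hj, east_cross _ _ hin hc, hw]⟩
    · have hPf : P v j = false := by simpa using hc
      have hn : northLabel n P v j = y := by rw [north_bump _ _ hin hPf, hw]
      rcases climb j hj v y hv hvn hn with ⟨h1, h2⟩ | ⟨e, he⟩
      · exact Or.inr (Or.inr ⟨fun _ => hPf, h1, h2⟩)
      · exact Or.inr (Or.inl ⟨fun _ => hPf, e, he⟩)
  · have hn : northLabel n P v j = y := by rw [north_out _ _ hin, hw]
    rcases climb j hj v y hv hvn hn with ⟨h1, h2⟩ | ⟨e, he⟩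
    · exact Or.inr (Or.inr ⟨fun h => absurd h hin, h1, h2⟩)
    · exact Or.inr (Or.inl ⟨fun h => absurd h hin, e, he⟩)

theorem colStep (j u v x y : ℕ) (hj : 1 ≤ j) (hu : 1 ≤ u) (huv : u < v)
    (hvn : v + j ≤ n + 1) (hwx : westLabel n P u j = x) (hwy : westLabel n P v j = y)
    (hnc : ∀ i, ¬ CrossAt n P i j x y) :
    northLabel n P 1 j = x ∨
    ∃ u' v', 1 ≤ u' ∧ u' < v' ∧ v' + (j+1) ≤ n + 1 ∧
      westLabel n P u' (j+1) = x ∧ westLabel n P v' (j+1) = y := by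
  have hun : u + j ≤ n := by omega
  rcases exitLemma j u x hj hu (by omega) hwx with
    ⟨hxc, hxn, hxw⟩ | ⟨hxf, e, he1, he2, he3, he4, he5, he6⟩ | ⟨hxf, hx1, hx2⟩
  · -- x crosses at (u,j), exits east at row u
    rcases exitLemma j v y hj (by omega) hvn hwy with
      ⟨hyc, hyn, hyw⟩ | ⟨hyf, e2, hf1, hf2, hf3, hf4, hf5, hf6⟩ | ⟨hyf, hy1, hy2⟩
    · exact Or.inr ⟨u, v, hu, huv, by omega, hxw, hyw⟩
    · rcases Nat.lt_trichotomy e2 u with h | h | h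
      · have := hf6 u h huv
        exact absurd (⟨hu, hj, hun, hxc, Or.inl ⟨hwx, this.2⟩⟩ : CrossAt n P u j x y)
          (hnc u)
      · subst h
        rw [hf3] at hxc; cases hxc
      · exact Or.inr ⟨u, e2, hu, h, by omega, hxw, hf5⟩
    · have := hy2 u hu huv
      exact absurd (⟨hu, hj, hun, hxc, Or.inl ⟨hwx, this.2⟩⟩ : CrossAt n P u j x y)
        (hnc u)
  · -- x bumps north at (u,j), exits east at row e < u
    have hPuf : P u j = false := hxf hun
    rcases exitLemma j v y hj (by omega) hvn hwy with
      ⟨hyc, hyn, hyw⟩ | ⟨hyf, e2, hf1, hf2, hf3, hf4, hf5, hf6⟩ | ⟨hyf, hy1, hy2⟩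
    · exact Or.inr ⟨e, v, he1, by omega, by omega, he5, hyw⟩
    · rcases Nat.lt_trichotomy e2 u with h | h | h
      · have := (hf6 u h huv).1
        rw [hPuf] at this; cases this
      · subst h
        exact Or.inr ⟨e, e2, he1, he2, by omega, he5, hf5⟩
      · exact Or.inr ⟨e, e2, he1, by omega, by omega, he5, hf5⟩
    · have := (hy2 u hu huv).1
      rw [hPuf] at this; cases this
  · exact Or.inl hx1

theorem west_lt_south_of_cross (hred : Reduced n P) (i j p q : ℕ)
    (hc : CrossAt n P i j p q) : westLabel n P i j < southLabel n P i j := by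
  obtain ⟨hi1, hj1, hijn, hPc, _⟩ := hc
  set x := westLabel n P i j with hx
  set y := southLabel n P i j with hy
  have crossxy : CrossAt n P i j x y := ⟨hi1, hj1, hijn, hPc, Or.inl ⟨rfl, rfl⟩⟩
  have crossyx : CrossAt n P i j y x := ⟨hi1, hj1, hijn, hPc, Or.inr ⟨rfl, rfl⟩⟩
  obtain ⟨v, hv1, hv2, hv3⟩ := down (n := n) (P := P) j (n+1-j-(i+1)) (i+1)
    (by omega) (by omega) rfl
  rw [south_eq_north] at hy
  rw [← hy] at hv3
  have hxy : x ≠ y := by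
    intro h
    have := west_inj (n := n) (P := P) j i v hj1 hi1 (by omega) (by omega) hv2
      (by rw [← hx, h, hv3])
    omega
  by_contra hlt
  have hyx : y < x := by
    rcases Nat.lt_trichotomy x y with h | h | h
    · exact absurd h hlt
    · exact absurd h hxy
    · exact h
  -- positions: y above x in every column up to j
  have main : ∀ c, 1 ≤ c → c ≤ j → ∃ u' v', 1 ≤ u' ∧ u' < v' ∧ v' + c ≤ n + 1 ∧
      westLabel n P u' c = y ∧ westLabel n P v' c = x := by
    intro c
    induction c with
    | zero => omega
    | succ c IH =>
      intro _ hcj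
      rcases Nat.eq_zero_or_pos c with hc0 | hc0
      · subst hc0
        have hxb := west_mem_bounds (n := n) (P := P) j i hj1 hi1 (by omega)
        have hy1 : 1 ≤ y := by
          have := row_lt_south (n := n) (P := P) i j
          omega
        rw [← hx] at hxb
        exact ⟨y, x, hy1, hyx, by omega, west_one y, west_one x⟩
      · obtain ⟨u', v', h1, h2, h3, h4, h5⟩ := IH hc0 (by omega)
        have hnc : ∀ i₂, ¬ CrossAt n P i₂ c y x := by
          intro i₂ hcr
          have := hred y x i₂ c i j hcr crossyx
          omega
        rcases colStep c u' v' y x hc0 h1 h2 h3 h4 h5 hnc with hexit | ⟨u2, v2, g1, g2, g3, g4, g5⟩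
        · exact absurd hexit (fun hexit => no_exit c j v y hc0 (by omega) (by omega) hv2 hexit hv3)
        · exact ⟨u2, v2, g1, g2, g3, g4, g5⟩
  obtain ⟨u', v', h1, h2, h3, h4, h5⟩ := main j hj1 le_rfl
  have e1 : u' = v := west_inj (n := n) (P := P) j u' v hj1 h1 (by omega) (by omega) hv2
    (by rw [h4, hv3])
  have e2 : v' = i := west_inj (n := n) (P := P) j v' i hj1 (by omega) (by omega) hi1
    (by omega) (by rw [h5, ← hx])
  omega
end

section
variable {n : ℕ} {P P' : ℕ → ℕ → Bool}

/-- labels only depend on tiles weakly-southwest of the box. -/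
theorem labels_congr : ∀ k i j, (n + 1 - i) + j = k →
    (∀ i' j', i ≤ i' → j' ≤ j → P i' j' = P' i' j') →
    labels n P i j = labels n P' i j := by
  intro k
  induction k using Nat.strong_induction_on with
  | _ k IH =>
  intro i j hk hag
  have hwest : westLabel n P i j = westLabel n P' i j := by
    rw [westLabel, westLabel]
    split
    · rfl
    · next hj =>
      rw [IH ((n+1-i) + (j-1)) (by omega) i (j-1) rfl
        (fun i' j' h1 h2 => hag i' j' h1 (by omega))]
  rw [labels_eq, labels_eq (P := P'), hwest]
  by_cases hin : i + j ≤ n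
  · have hsouth : southLabel n P i j = southLabel n P' i j := by
      rw [southLabel, southLabel,
        IH ((n+1-(i+1)) + j) (by omega) (i+1) j rfl
          (fun i' j' h1 h2 => hag i' j' (by omega) h2)]
    rw [hsouth, hag i j le_rfl le_rfl]
  · simp [hin]

/-- propagate a north label down a run of crosses. -/
theorem north_prop (j : ℕ) : ∀ t r r₀, r + t = r₀ → 1 ≤ r → r₀ + j ≤ n + 1 →
    (∀ i, r ≤ i → i < r₀ → P i j = true) →
    northLabel n P r j = northLabel n P r₀ j := by
  intro t
  induction t with
  | zero => intro r r₀ h _ _ _; rw [show r = r₀ by omega]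
  | succ t IH =>
    intro r r₀ h h1 h2 hcr
    have hrj : r + j ≤ n := by omega
    rw [north_cross r j hrj (hcr r le_rfl (by omega)), south_eq_north]
    exact IH (r+1) r₀ (by omega) (by omega) h2 (fun i hi1 hi2 => hcr i (by omega) hi2)

/-- propagate a west label along a run of crosses. -/
theorem west_prop (i j₀ : ℕ) (hj0 : 1 ≤ j₀) : ∀ t, i + (j₀ + t) ≤ n →
    (∀ jj, j₀ < jj → jj ≤ j₀ + t → P i jj = true) →
    westLabel n P i (j₀ + t + 1) = westLabel n P i (j₀ + 1) := by
  intro t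
  induction t with
  | zero => intro _ _; rfl
  | succ t IH =>
    intro hn hcr
    have h1 : (j₀ + t) + 1 = j₀ + (t+1) := by omega
    rw [show j₀ + (t+1) + 1 = (j₀ + t + 1) + 1 by omega,
      west_succ _ _ (by omega),
      east_cross _ _ (by omega) (hcr (j₀ + t + 1) (by omega) (by omega))]
    exact IH (by omega) (fun jj a1 a2 => hcr jj a1 (by omega))

/-- west label equality over a run of crosses, convenient form. -/
theorem west_run (i j₀ j : ℕ) (hj0 : 1 ≤ j₀) (hj : j₀ < j) (hn : i + j ≤ n + 1)
    (hcr : ∀ jj, j₀ < jj → jj < j → P i jj = true) :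
    westLabel n P i j = westLabel n P i (j₀ + 1) := by
  have h1 : j = j₀ + (j - 1 - j₀) + 1 := by omega
  rw [h1]
  exact west_prop i j₀ hj0 (j - 1 - j₀) (by omega)
    (fun jj a1 a2 => hcr jj a1 (by omega))
end

section
variable {n : ℕ} {P : ℕ → ℕ → Bool} {a b c d : ℕ}

theorem B1 (hR : IsChuteRect n P a b c d) (r : ℕ) (h1 : a < r) (h2 : r ≤ b) :
    northLabel n P r c = westLabel n P b c := by
  obtain ⟨ha1, hab, hc1, hcd, hbd, hPac, hPbc, hPbd, hcr⟩ := hR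
  have hb : northLabel n P b c = westLabel n P b c :=
    north_bump b c (by omega) hPbc
  rw [← hb]
  exact north_prop c (b - r) r b (by omega) (by omega) (by omega)
    (fun i hi1 hi2 => hcr i c (by omega) (by omega) le_rfl (by omega)
      (by omega) (by omega) (by omega))

theorem B2 (hR : IsChuteRect n P a b c d) (r : ℕ) (h1 : a ≤ r) (h2 : r < b) :
    southLabel n P r c = westLabel n P b c := by
  rw [south_eq_north]; exact B1 hR (r+1) (by omega) (by omega)

theorem B3 (hR : IsChuteRect n P a b c d) :
    eastLabel n P b c = northLabel n P (b+1) c := by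
  obtain ⟨ha1, hab, hc1, hcd, hbd, hPac, hPbc, hPbd, hcr⟩ := hR
  rw [east_bump b c (by omega) hPbc, south_eq_north]

theorem B4 (hR : IsChuteRect n P a b c d) (j : ℕ) (h1 : c < j) (h2 : j ≤ d) :
    westLabel n P b j = northLabel n P (b+1) c := by
  have hR' := hR
  obtain ⟨ha1, hab, hc1, hcd, hbd, hPac, hPbc, hPbd, hcr⟩ := hR'
  rcases Nat.eq_or_lt_of_le h1 with h | h
  · rw [← h, west_succ _ _ hc1]; exact B3 hR
  · rw [west_run b c j hc1 (by omega) (by omega)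
      (fun jj a1 a2 => hcr b jj (by omega) le_rfl (by omega) (by omega)
        (by omega) (by omega) (by omega)),
      west_succ _ _ hc1]
    exact B3 hR

theorem B6 (hR : IsChuteRect n P a b c d) (r j : ℕ) (h1 : a ≤ r) (h2 : r ≤ b)
    (h3 : c < j) (h4 : j < d) : northLabel n P r j = northLabel n P (b+1) j := by
  obtain ⟨ha1, hab, hc1, hcd, hbd, hPac, hPbc, hPbd, hcr⟩ := hR
  exact north_prop j (b+1-r) r (b+1) (by omega) (by omega) (by omega)
    (fun i hi1 hi2 => hcr i j (by omega) (by omega) (by omega) (by omega)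
      (by omega) (by omega) (by omega))

theorem B7 (hR : IsChuteRect n P a b c d) (r j : ℕ) (h1 : a ≤ r) (h2 : r ≤ b)
    (h3 : c < j) (h4 : j < d) : southLabel n P r j = northLabel n P (b+1) j := by
  rw [south_eq_north]
  rcases Nat.eq_or_lt_of_le h2 with h | h
  · rw [h]
  · exact B6 hR (r+1) j (by omega) (by omega) h3 h4

theorem B8 (hR : IsChuteRect n P a b c d) (r j : ℕ) (h1 : a < r) (h2 : r < b)
    (h3 : c ≤ j) (h4 : j ≤ d) : westLabel n P r j = westLabel n P r c := by
  obtain ⟨ha1, hab, hc1, hcd, hbd, hPac, hPbc, hPbd, hcr⟩ := hR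
  rcases Nat.eq_or_lt_of_le h3 with h | h
  · rw [← h]
  · rw [west_run r c j hc1 (by omega) (by omega)
      (fun jj a1 a2 => hcr r jj (by omega) (by omega) (by omega) (by omega)
        (by omega) (by omega) (by omega)),
      west_succ _ _ hc1,
      east_cross _ _ (by omega) (hcr r c (by omega) (by omega) le_rfl (by omega)
        (by omega) (by omega) (by omega))]

theorem B9 (hR : IsChuteRect n P a b c d) :
    northLabel n P b d = northLabel n P (b+1) c := by
  have hR' := hR
  obtain ⟨ha1, hab, hc1, hcd, hbd, hPac, hPbc, hPbd, hcr⟩ := hR'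
  by_cases hin : b + d ≤ n
  · rw [north_bump b d hin hPbd]; exact B4 hR d hcd le_rfl
  · rw [north_out b d hin]; exact B4 hR d hcd le_rfl

theorem B10 (hR : IsChuteRect n P a b c d) (r : ℕ) (h1 : a ≤ r) (h2 : r ≤ b) :
    northLabel n P r d = northLabel n P (b+1) c := by
  have hR' := hR
  obtain ⟨ha1, hab, hc1, hcd, hbd, hPac, hPbc, hPbd, hcr⟩ := hR'
  rw [← B9 hR]
  exact north_prop d (b - r) r b (by omega) (by omega) (by omega)
    (fun i hi1 hi2 => hcr i d (by omega) (by omega) (by omega) le_rfl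
      (by omega) (by omega) (by omega))

theorem B11 (hR : IsChuteRect n P a b c d) (r : ℕ) (h1 : a ≤ r) (h2 : r < b) :
    southLabel n P r d = northLabel n P (b+1) c := by
  rw [south_eq_north]; exact B10 hR (r+1) (by omega) h2

theorem B12 (hR : IsChuteRect n P a b c d) :
    eastLabel n P a c = westLabel n P b c := by
  have hR' := hR
  obtain ⟨ha1, hab, hc1, hcd, hbd, hPac, hPbc, hPbd, hcr⟩ := hR'
  rw [east_bump a c (by omega) hPac]
  exact B2 hR a le_rfl (by omega)

theorem B13 (hR : IsChuteRect n P a b c d) (j : ℕ) (h1 : c < j) (h2 : j ≤ d) :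
    westLabel n P a j = westLabel n P b c := by
  have hR' := hR
  obtain ⟨ha1, hab, hc1, hcd, hbd, hPac, hPbc, hPbd, hcr⟩ := hR'
  rcases Nat.eq_or_lt_of_le h1 with h | h
  · rw [← h, west_succ _ _ hc1]; exact B12 hR
  · rw [west_run a c j hc1 (by omega) (by omega)
      (fun jj a1 a2 => hcr a jj le_rfl (by omega) (by omega) (by omega)
        (by omega) (by omega) (by omega)),
      west_succ _ _ hc1]
    exact B12 hR
end

section
variable {n : ℕ} {P : ℕ → ℕ → Bool} {a b c d : ℕ}

theorem cR1 : chuteResult P a b c d b c = true := by simp [chuteResult]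

theorem cR2 (hab : a < b) : chuteResult P a b c d a d = false := by
  simp [chuteResult]; omega

theorem cR3 (i j : ℕ) (h1 : ¬(i = b ∧ j = c)) (h2 : ¬(i = a ∧ j = d)) :
    chuteResult P a b c d i j = P i j := by
  simp only [chuteResult, if_neg h1, if_neg h2]

theorem S1 (i j : ℕ) (h : b < i) (hab : a < b) :
    labels n (chuteResult P a b c d) i j = labels n P i j :=
  (labels_congr _ i j rfl (fun i' j' h1 _ =>
    (cR3 i' j' (by omega) (by omega)).symm)).symm

theorem S2 (i j : ℕ) (h : j < c) (hcd : c < d) :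
    labels n (chuteResult P a b c d) i j = labels n P i j :=
  (labels_congr _ i j rfl (fun i' j' _ h2 =>
    (cR3 i' j' (by omega) (by omega)).symm)).symm

theorem E2 (hab : a < b) (hcd : c < d) (r : ℕ) :
    westLabel n (chuteResult P a b c d) r c = westLabel n P r c := by
  rw [westLabel, westLabel]
  split
  · rfl
  · next h => rw [S2 r (c-1) (by omega) hcd]

theorem E3 (hab : a < b) (j : ℕ) :
    northLabel n (chuteResult P a b c d) (b+1) j = northLabel n P (b+1) j := by
  rw [northLabel, northLabel, S1 (b+1) j (by omega) hab]

-- tiles of the chute result inside the rectangle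
theorem cRcross (hR : IsChuteRect n P a b c d) (i j : ℕ) (h1 : a ≤ i) (h2 : i ≤ b)
    (h3 : c ≤ j) (h4 : j ≤ d) (g1 : ¬(i = a ∧ j = c)) (g2 : ¬(i = a ∧ j = d))
    (g3 : ¬(i = b ∧ j = d)) : chuteResult P a b c d i j = true := by
  obtain ⟨ha1, hab, hc1, hcd, hbd, hPac, hPbc, hPbd, hcr⟩ := hR
  by_cases hbc : i = b ∧ j = c
  · obtain ⟨rfl, rfl⟩ := hbc; exact cR1
  · rw [cR3 i j hbc g2]
    exact hcr i j h1 h2 h3 h4 g1 hbc g3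

theorem A2 (hR : IsChuteRect n P a b c d) (r : ℕ) (h1 : a < r) (h2 : r ≤ b + 1) :
    northLabel n (chuteResult P a b c d) r c
      = northLabel n (chuteResult P a b c d) (b+1) c := by
  have hR' := hR
  obtain ⟨ha1, hab, hc1, hcd, hbd, hPac, hPbc, hPbd, hcr⟩ := hR'
  exact north_prop c (b+1-r) r (b+1) (by omega) (by omega) (by omega)
    (fun i hi1 hi2 => cRcross hR i c (by omega) (by omega) le_rfl (by omega)
      (by omega) (by omega) (by omega))

theorem A2' (hR : IsChuteRect n P a b c d) (r : ℕ) (h1 : a ≤ r) (h2 : r ≤ b) :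
    southLabel n (chuteResult P a b c d) r c
      = northLabel n (chuteResult P a b c d) (b+1) c := by
  rw [south_eq_north]
  rcases Nat.eq_or_lt_of_le h2 with h | h
  · rw [h]
  · exact A2 hR (r+1) (by omega) (by omega)

theorem A4 (hR : IsChuteRect n P a b c d) (j : ℕ) (h3 : c ≤ j) (h4 : j ≤ d) :
    westLabel n (chuteResult P a b c d) b j
      = westLabel n (chuteResult P a b c d) b c := by
  have hR' := hR
  obtain ⟨ha1, hab, hc1, hcd, hbd, hPac, hPbc, hPbd, hcr⟩ := hR'
  rcases Nat.eq_or_lt_of_le h3 with h | h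
  · rw [← h]
  · rw [west_run b c j hc1 (by omega) (by omega)
      (fun jj a1 a2 => cRcross hR b jj (by omega) le_rfl (by omega) (by omega)
        (by omega) (by omega) (by omega)),
      west_succ _ _ hc1,
      east_cross _ _ (by omega) cR1]

theorem A5 (hR : IsChuteRect n P a b c d) (r j : ℕ) (h1 : a ≤ r) (h2 : r ≤ b)
    (h3 : c < j) (h4 : j < d) :
    northLabel n (chuteResult P a b c d) r j
      = northLabel n (chuteResult P a b c d) (b+1) j := by
  have hR' := hR
  obtain ⟨ha1, hab, hc1, hcd, hbd, hPac, hPbc, hPbd, hcr⟩ := hR'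
  exact north_prop j (b+1-r) r (b+1) (by omega) (by omega) (by omega)
    (fun i hi1 hi2 => cRcross hR i j (by omega) (by omega) (by omega) (by omega)
      (by omega) (by omega) (by omega))

theorem A5' (hR : IsChuteRect n P a b c d) (r j : ℕ) (h1 : a ≤ r) (h2 : r ≤ b)
    (h3 : c < j) (h4 : j < d) :
    southLabel n (chuteResult P a b c d) r j
      = northLabel n (chuteResult P a b c d) (b+1) j := by
  rw [south_eq_north]
  rcases Nat.eq_or_lt_of_le h2 with h | h
  · rw [h]
  · exact A5 hR (r+1) j (by omega) (by omega) h3 h4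

theorem A6 (hR : IsChuteRect n P a b c d) :
    northLabel n (chuteResult P a b c d) b d
      = westLabel n (chuteResult P a b c d) b d := by
  have hR' := hR
  obtain ⟨ha1, hab, hc1, hcd, hbd, hPac, hPbc, hPbd, hcr⟩ := hR'
  have hPf : chuteResult P a b c d b d = false := by
    rw [cR3 b d (by omega) (by omega)]; exact hPbd
  by_cases hin : b + d ≤ n
  · exact north_bump b d hin hPf
  · exact north_out b d hin

theorem A7 (hR : IsChuteRect n P a b c d) (r : ℕ) (h1 : a < r) (h2 : r ≤ b) :
    northLabel n (chuteResult P a b c d) r d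
      = northLabel n (chuteResult P a b c d) b d := by
  have hR' := hR
  obtain ⟨ha1, hab, hc1, hcd, hbd, hPac, hPbc, hPbd, hcr⟩ := hR'
  exact north_prop d (b-r) r b (by omega) (by omega) (by omega)
    (fun i hi1 hi2 => cRcross hR i d (by omega) (by omega) (by omega) le_rfl
      (by omega) (by omega) (by omega))

theorem A7' (hR : IsChuteRect n P a b c d) (r : ℕ) (h1 : a ≤ r) (h2 : r < b) :
    southLabel n (chuteResult P a b c d) r d
      = northLabel n (chuteResult P a b c d) b d := by
  rw [south_eq_north]; exact A7 hR (r+1) (by omega) (by omega)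

theorem A8 (hR : IsChuteRect n P a b c d) :
    eastLabel n (chuteResult P a b c d) a c
      = northLabel n (chuteResult P a b c d) (b+1) c := by
  have hR' := hR
  obtain ⟨ha1, hab, hc1, hcd, hbd, hPac, hPbc, hPbd, hcr⟩ := hR'
  have hPf : chuteResult P a b c d a c = false := by
    rw [cR3 a c (by omega) (by omega)]; exact hPac
  rw [east_bump a c (by omega) hPf]
  exact A2' hR a le_rfl (by omega)

theorem A9 (hR : IsChuteRect n P a b c d) (j : ℕ) (h1 : c < j) (h2 : j ≤ d) :
    westLabel n (chuteResult P a b c d) a j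
      = northLabel n (chuteResult P a b c d) (b+1) c := by
  have hR' := hR
  obtain ⟨ha1, hab, hc1, hcd, hbd, hPac, hPbc, hPbd, hcr⟩ := hR'
  rcases Nat.eq_or_lt_of_le h1 with h | h
  · rw [← h, west_succ _ _ hc1]; exact A8 hR
  · rw [west_run a c j hc1 (by omega) (by omega)
      (fun jj a1 a2 => cRcross hR a jj le_rfl (by omega) (by omega) (by omega)
        (by omega) (by omega) (by omega)),
      west_succ _ _ hc1]
    exact A8 hR

theorem A14 (hR : IsChuteRect n P a b c d) (r j : ℕ) (h1 : a < r) (h2 : r < b)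
    (h3 : c ≤ j) (h4 : j ≤ d) :
    westLabel n (chuteResult P a b c d) r j
      = westLabel n (chuteResult P a b c d) r c := by
  have hR' := hR
  obtain ⟨ha1, hab, hc1, hcd, hbd, hPac, hPbc, hPbd, hcr⟩ := hR'
  rcases Nat.eq_or_lt_of_le h3 with h | h
  · rw [← h]
  · rw [west_run r c j hc1 (by omega) (by omega)
      (fun jj a1 a2 => cRcross hR r jj (by omega) (by omega) (by omega) (by omega)
        (by omega) (by omega) (by omega)),
      west_succ _ _ hc1,
      east_cross _ _ (by omega) (cRcross hR r c (by omega) (by omega) le_rfl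
        (by omega) (by omega) (by omega) (by omega))]
end

section
variable {n : ℕ} {P : ℕ → ℕ → Bool} {a b c d : ℕ}

theorem XB1 (hR : IsChuteRect n P a b c d) :
    CrossAt n P a d (westLabel n P b c) (northLabel n P (b+1) c) := by
  have hR' := hR
  obtain ⟨ha1, hab, hc1, hcd, hbd, hPac, hPbc, hPbd, hcr⟩ := hR'
  exact ⟨ha1, by omega, by omega,
    hcr a d le_rfl (by omega) (by omega) le_rfl (by omega) (by omega) (by omega),
    Or.inl ⟨B13 hR d hcd le_rfl, B11 hR a le_rfl hab⟩⟩

theorem XB2 (hR : IsChuteRect n P a b c d) (j : ℕ) (h1 : c < j) (h2 : j < d) :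
    CrossAt n P a j (westLabel n P b c) (northLabel n P (b+1) j) := by
  have hR' := hR
  obtain ⟨ha1, hab, hc1, hcd, hbd, hPac, hPbc, hPbd, hcr⟩ := hR'
  exact ⟨ha1, by omega, by omega,
    hcr a j le_rfl (by omega) (by omega) (by omega) (by omega) (by omega) (by omega),
    Or.inl ⟨B13 hR j h1 (by omega), B7 hR a j le_rfl (by omega) h1 h2⟩⟩

theorem XB3 (hR : IsChuteRect n P a b c d) (j : ℕ) (h1 : c < j) (h2 : j < d) :
    CrossAt n P b j (northLabel n P (b+1) c) (northLabel n P (b+1) j) := by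
  have hR' := hR
  obtain ⟨ha1, hab, hc1, hcd, hbd, hPac, hPbc, hPbd, hcr⟩ := hR'
  exact ⟨by omega, by omega, by omega,
    hcr b j (by omega) le_rfl (by omega) (by omega) (by omega) (by omega) (by omega),
    Or.inl ⟨B4 hR j h1 (by omega), rfl⟩⟩

theorem XB4 (hR : IsChuteRect n P a b c d) (r : ℕ) (h1 : a < r) (h2 : r < b) :
    CrossAt n P r c (westLabel n P r c) (westLabel n P b c) := by
  have hR' := hR
  obtain ⟨ha1, hab, hc1, hcd, hbd, hPac, hPbc, hPbd, hcr⟩ := hR'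
  exact ⟨by omega, hc1, by omega,
    hcr r c (by omega) (by omega) le_rfl (by omega) (by omega) (by omega) (by omega),
    Or.inl ⟨rfl, B2 hR r (by omega) h2⟩⟩

theorem XB5 (hR : IsChuteRect n P a b c d) (r : ℕ) (h1 : a < r) (h2 : r < b) :
    CrossAt n P r d (westLabel n P r c) (northLabel n P (b+1) c) := by
  have hR' := hR
  obtain ⟨ha1, hab, hc1, hcd, hbd, hPac, hPbc, hPbd, hcr⟩ := hR'
  exact ⟨by omega, by omega, by omega,
    hcr r d (by omega) (by omega) (by omega) le_rfl (by omega) (by omega) (by omega),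
    Or.inl ⟨B8 hR r d h1 h2 (by omega) le_rfl, B11 hR r (by omega) h2⟩⟩

theorem XB6 (hR : IsChuteRect n P a b c d) (r j : ℕ) (h1 : a < r) (h2 : r < b)
    (h3 : c < j) (h4 : j < d) :
    CrossAt n P r j (westLabel n P r c) (northLabel n P (b+1) j) := by
  have hR' := hR
  obtain ⟨ha1, hab, hc1, hcd, hbd, hPac, hPbc, hPbd, hcr⟩ := hR'
  exact ⟨by omega, by omega, by omega,
    hcr r j (by omega) (by omega) (by omega) (by omega) (by omega) (by omega) (by omega),
    Or.inl ⟨B8 hR r j h1 h2 (by omega) (by omega), B7 hR r j (by omega) (by omega) h3 h4⟩⟩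

theorem XA1 (hR : IsChuteRect n P a b c d) :
    CrossAt n (chuteResult P a b c d) b c (westLabel n P b c) (northLabel n P (b+1) c) := by
  have hR' := hR
  obtain ⟨ha1, hab, hc1, hcd, hbd, hPac, hPbc, hPbd, hcr⟩ := hR'
  refine ⟨by omega, hc1, by omega, cR1, Or.inl ⟨?_, ?_⟩⟩
  · exact E2 hab hcd b
  · rw [south_eq_north]; exact E3 hab c

theorem XA2 (hR : IsChuteRect n P a b c d) (j : ℕ) (h1 : c < j) (h2 : j < d) :
    CrossAt n (chuteResult P a b c d) b j (westLabel n P b c) (northLabel n P (b+1) j) := by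
  have hR' := hR
  obtain ⟨ha1, hab, hc1, hcd, hbd, hPac, hPbc, hPbd, hcr⟩ := hR'
  refine ⟨by omega, by omega, by omega,
    cRcross hR b j (by omega) le_rfl (by omega) (by omega) (by omega) (by omega) (by omega),
    Or.inl ⟨?_, ?_⟩⟩
  · rw [A4 hR j (by omega) (by omega)]; exact E2 hab hcd b
  · rw [south_eq_north]; exact E3 hab j

theorem XA3 (hR : IsChuteRect n P a b c d) (j : ℕ) (h1 : c < j) (h2 : j < d) :
    CrossAt n (chuteResult P a b c d) a j (northLabel n P (b+1) c) (northLabel n P (b+1) j) := by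
  have hR' := hR
  obtain ⟨ha1, hab, hc1, hcd, hbd, hPac, hPbc, hPbd, hcr⟩ := hR'
  refine ⟨ha1, by omega, by omega,
    cRcross hR a j le_rfl (by omega) (by omega) (by omega) (by omega) (by omega) (by omega),
    Or.inl ⟨?_, ?_⟩⟩
  · rw [A9 hR j h1 (by omega)]; exact E3 hab c
  · rw [A5' hR a j le_rfl (by omega) h1 h2]; exact E3 hab j

theorem XA4 (hR : IsChuteRect n P a b c d) (r : ℕ) (h1 : a < r) (h2 : r < b) :
    CrossAt n (chuteResult P a b c d) r c (westLabel n P r c) (northLabel n P (b+1) c) := by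
  have hR' := hR
  obtain ⟨ha1, hab, hc1, hcd, hbd, hPac, hPbc, hPbd, hcr⟩ := hR'
  refine ⟨by omega, hc1, by omega,
    cRcross hR r c (by omega) (by omega) le_rfl (by omega) (by omega) (by omega) (by omega),
    Or.inl ⟨E2 hab hcd r, ?_⟩⟩
  · rw [A2' hR r (by omega) (by omega)]; exact E3 hab c

theorem XA5 (hR : IsChuteRect n P a b c d) (r : ℕ) (h1 : a < r) (h2 : r < b) :
    CrossAt n (chuteResult P a b c d) r d (westLabel n P r c) (westLabel n P b c) := by
  have hR' := hR
  obtain ⟨ha1, hab, hc1, hcd, hbd, hPac, hPbc, hPbd, hcr⟩ := hR'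
  refine ⟨by omega, by omega, by omega,
    cRcross hR r d (by omega) (by omega) (by omega) le_rfl (by omega) (by omega) (by omega),
    Or.inl ⟨?_, ?_⟩⟩
  · rw [A14 hR r d h1 h2 (by omega) le_rfl]; exact E2 hab hcd r
  · rw [A7' hR r (by omega) h2, A6 hR, A4 hR d (by omega) le_rfl]
    exact E2 hab hcd b

theorem XA6 (hR : IsChuteRect n P a b c d) (r j : ℕ) (h1 : a < r) (h2 : r < b)
    (h3 : c < j) (h4 : j < d) :
    CrossAt n (chuteResult P a b c d) r j (westLabel n P r c) (northLabel n P (b+1) j) := by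
  have hR' := hR
  obtain ⟨ha1, hab, hc1, hcd, hbd, hPac, hPbc, hPbd, hcr⟩ := hR'
  refine ⟨by omega, by omega, by omega,
    cRcross hR r j (by omega) (by omega) (by omega) (by omega) (by omega) (by omega) (by omega),
    Or.inl ⟨?_, ?_⟩⟩
  · rw [A14 hR r j h1 h2 (by omega) (by omega)]; exact E2 hab hcd r
  · rw [A5' hR r j (by omega) (by omega) h3 h4]; exact E3 hab j
end

section
variable {n : ℕ} {P : ℕ → ℕ → Bool} {a b c d : ℕ}

theorem NORTHA (hR : IsChuteRect n P a b c d) (j : ℕ) (h1 : c ≤ j) (h2 : j ≤ d) :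
    northLabel n (chuteResult P a b c d) a j = northLabel n P a j := by
  have hR' := hR
  obtain ⟨ha1, hab, hc1, hcd, hbd, hPac, hPbc, hPbd, hcr⟩ := hR'
  rcases Nat.eq_or_lt_of_le h1 with h | h
  · rw [← h]
    have hPf : chuteResult P a b c d a c = false := by
      rw [cR3 a c (by omega) (by omega)]; exact hPac
    rw [north_bump a c (by omega) hPf, north_bump a c (by omega) hPac]
    exact E2 hab hcd a
  rcases Nat.eq_or_lt_of_le h2 with h' | h'
  · rw [h']
    have hPf : chuteResult P a b c d a d = false := cR2 hab
    rw [north_bump a d (by omega) hPf, A9 hR d (by omega) le_rfl, E3 hab c,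
      B10 hR a le_rfl (by omega)]
  · rw [A5 hR a j le_rfl (by omega) h h', E3 hab j, B6 hR a j le_rfl (by omega) h h']

theorem EASTD (hR : IsChuteRect n P a b c d) (r : ℕ) (h1 : a ≤ r) (h2 : r < b) :
    eastLabel n (chuteResult P a b c d) r d = eastLabel n P r d := by
  have hR' := hR
  obtain ⟨ha1, hab, hc1, hcd, hbd, hPac, hPbc, hPbd, hcr⟩ := hR'
  rcases Nat.eq_or_lt_of_le h1 with h | h
  · rw [← h]
    have hPf : chuteResult P a b c d a d = false := cR2 hab
    rw [east_bump a d (by omega) hPf, east_cross a d (by omega)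
      (hcr a d le_rfl (by omega) (by omega) le_rfl (by omega) (by omega) (by omega))]
    rw [south_eq_north, A7 hR (a+1) (by omega) (by omega), A6 hR,
      A4 hR d (by omega) le_rfl, E2 hab hcd b, B13 hR d hcd le_rfl]
  · have hcross' : chuteResult P a b c d r d = true :=
      cRcross hR r d (by omega) (by omega) (by omega) le_rfl (by omega) (by omega) (by omega)
    rw [east_cross r d (by omega) hcross', east_cross r d (by omega)
      (hcr r d (by omega) (by omega) (by omega) le_rfl (by omega) (by omega) (by omega))]
    rw [A14 hR r d h h2 (by omega) le_rfl, E2 hab hcd r,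
      B8 hR r d h h2 (by omega) le_rfl]

theorem EASTDB (hR : IsChuteRect n P a b c d) (hin : b + d ≤ n) :
    eastLabel n (chuteResult P a b c d) b d = eastLabel n P b d := by
  have hR' := hR
  obtain ⟨ha1, hab, hc1, hcd, hbd, hPac, hPbc, hPbd, hcr⟩ := hR'
  have hPf : chuteResult P a b c d b d = false := by
    rw [cR3 b d (by omega) (by omega)]; exact hPbd
  rw [east_bump b d hin hPf, east_bump b d hin hPbd, south_eq_north, south_eq_north]
  exact E3 hab d

/-- labels agree outside the rectangle (on the staircase). -/
theorem STAB2 (hR : IsChuteRect n P a b c d) : ∀ k i j, (n + 1 - i) + j = k →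
    i + j ≤ n + 1 → ¬(a ≤ i ∧ i ≤ b ∧ c ≤ j ∧ j ≤ d) →
    labels n (chuteResult P a b c d) i j = labels n P i j := by
  have hR' := hR
  obtain ⟨ha1, hab, hc1, hcd, hbd, hPac, hPbc, hPbd, hcr⟩ := hR'
  intro k
  induction k using Nat.strong_induction_on with
  | _ k IH =>
  intro i j hk hin hout
  have htile : chuteResult P a b c d i j = P i j := by
    apply cR3 <;> omega
  have hwest : westLabel n (chuteResult P a b c d) i j = westLabel n P i j := by
    rw [westLabel, westLabel]
    split
    · rfl
    · next hj =>
      by_cases hrect : a ≤ i ∧ i ≤ b ∧ c ≤ j - 1 ∧ j - 1 ≤ d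
      · -- only possible: j - 1 = d
        have hjd : j - 1 = d := by omega
        have hie : i + d ≤ n := by omega
        rcases Nat.eq_or_lt_of_le hrect.2.1 with h | h
        · rw [hjd, ← eastLabel, ← eastLabel, h, EASTDB hR (by omega)]
        · rw [hjd, ← eastLabel, ← eastLabel, EASTD hR i hrect.1 h]
      · rw [IH ((n+1-i) + (j-1)) (by omega) i (j-1) rfl (by omega) hrect]
  rw [labels_eq, labels_eq, hwest, htile]
  by_cases hstair : i + j ≤ n
  · have hsouth : southLabel n (chuteResult P a b c d) i j = southLabel n P i j := by
      by_cases hrect : a ≤ i + 1 ∧ i + 1 ≤ b ∧ c ≤ j ∧ j ≤ d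
      · have hia : i + 1 = a := by omega
        rw [south_eq_north, south_eq_north, hia]
        exact NORTHA hR j hrect.2.2.1 hrect.2.2.2
      · rw [south_eq_north, south_eq_north, northLabel, northLabel,
          IH ((n+1-(i+1)) + j) (by omega) (i+1) j rfl (by omega) hrect]
    rw [hsouth]
  · simp [hstair]

theorem WESTOUT (hR : IsChuteRect n P a b c d) (i j : ℕ)
    (hin : i + j ≤ n + 1) (hout : ¬(a ≤ i ∧ i ≤ b ∧ c ≤ j ∧ j ≤ d)) :
    westLabel n (chuteResult P a b c d) i j = westLabel n P i j := by
  have hR' := hR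
  obtain ⟨ha1, hab, hc1, hcd, hbd, hPac, hPbc, hPbd, hcr⟩ := hR'
  rw [westLabel, westLabel]
  split
  · rfl
  · next hj =>
    by_cases hrect : a ≤ i ∧ i ≤ b ∧ c ≤ j - 1 ∧ j - 1 ≤ d
    · have hjd : j - 1 = d := by omega
      have hie : i + d ≤ n := by omega
      rcases Nat.eq_or_lt_of_le hrect.2.1 with h | h
      · rw [hjd, ← eastLabel, ← eastLabel, h, EASTDB hR (by omega)]
      · rw [hjd, ← eastLabel, ← eastLabel, EASTD hR i hrect.1 h]
    · rw [STAB2 hR _ i (j-1) rfl (by omega) hrect]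

theorem SOUTHOUT (hR : IsChuteRect n P a b c d) (i j : ℕ)
    (hin : i + j ≤ n) (hout : ¬(a ≤ i ∧ i ≤ b ∧ c ≤ j ∧ j ≤ d)) :
    southLabel n (chuteResult P a b c d) i j = southLabel n P i j := by
  by_cases hrect : a ≤ i + 1 ∧ i + 1 ≤ b ∧ c ≤ j ∧ j ≤ d
  · have hia : i + 1 = a := by omega
    rw [south_eq_north, south_eq_north, hia]
    exact NORTHA hR j hrect.2.2.1 hrect.2.2.2
  · rw [south_eq_north, south_eq_north, northLabel, northLabel,
      STAB2 hR _ (i+1) j rfl (by omega) hrect]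

theorem CROSSOUT (hR : IsChuteRect n P a b c d) (i j p q : ℕ)
    (hout : ¬(a ≤ i ∧ i ≤ b ∧ c ≤ j ∧ j ≤ d)) :
    (CrossAt n P i j p q ↔ CrossAt n (chuteResult P a b c d) i j p q) := by
  have hR' := hR
  obtain ⟨ha1, hab, hc1, hcd, hbd, hPac, hPbc, hPbd, hcr⟩ := hR'
  constructor
  · rintro ⟨h1, h2, h3, h4, h5⟩
    refine ⟨h1, h2, h3, by rw [cR3 i j (by omega) (by omega)]; exact h4, ?_⟩
    rw [WESTOUT hR i j (by omega) hout, SOUTHOUT hR i j h3 hout]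
    exact h5
  · rintro ⟨h1, h2, h3, h4, h5⟩
    rw [cR3 i j (by omega) (by omega)] at h4
    refine ⟨h1, h2, h3, h4, ?_⟩
    rw [WESTOUT hR i j (by omega) hout, SOUTHOUT hR i j h3 hout] at h5
    exact h5
end

def PairIs (x y p q : ℕ) : Prop := (p = x ∧ q = y) ∨ (p = y ∧ q = x)

section
variable {n : ℕ} {P : ℕ → ℕ → Bool} {a b c d : ℕ}

theorem theta_eq_of_cross (hred : Reduced n P) {i j p q : ℕ}
    (h : CrossAt n P i j p q) : theta n P p q = i := by
  rw [theta]
  split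
  · next hex => exact (hred p q _ _ i j (Classical.choose_spec hex) h).1
  · next hex => exact absurd ⟨(i,j), h⟩ hex

theorem theta_ne_zero_of_cross {i j p q : ℕ} (h : CrossAt n P i j p q) :
    theta n P p q ≠ 0 := by
  rw [theta]
  split
  · next hex =>
    have := (Classical.choose_spec hex).1
    omega
  · next hex => exact absurd ⟨(i,j), h⟩ hex

theorem theta_spec (p q : ℕ) (h : theta n P p q ≠ 0) :
    ∃ j', CrossAt n P (theta n P p q) j' p q := by
  by_cases hex : ∃ rc : ℕ × ℕ, CrossAt n P rc.1 rc.2 p q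
  · have hs := Classical.choose_spec hex
    have he : theta n P p q = (Classical.choose hex).1 := by rw [theta, dif_pos hex]
    rw [he]
    exact ⟨(Classical.choose hex).2, hs⟩
  · rw [theta, dif_neg hex] at h
    exact absurd rfl h

theorem cross_of_pairIs {i j x y p q : ℕ} (h : CrossAt n P i j x y)
    (hp : PairIs x y p q) : CrossAt n P i j p q := by
  obtain ⟨h1, h2, h3, h4, h5⟩ := h
  refine ⟨h1, h2, h3, h4, ?_⟩
  rcases hp with ⟨rfl, rfl⟩ | ⟨rfl, rfl⟩
  · exact h5
  · rcases h5 with ⟨e1, e2⟩ | ⟨e1, e2⟩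
    · exact Or.inr ⟨e1, e2⟩
    · exact Or.inl ⟨e1, e2⟩

theorem pairIs_of_cross {i j x y p q : ℕ} (h : CrossAt n P i j p q)
    (hw : westLabel n P i j = x) (hs : southLabel n P i j = y) : PairIs x y p q := by
  obtain ⟨_, _, _, _, h5⟩ := h
  rcases h5 with ⟨e1, e2⟩ | ⟨e1, e2⟩
  · exact Or.inl ⟨by rw [← e1, hw], by rw [← e2, hs]⟩
  · exact Or.inr ⟨by rw [← e2, hs], by rw [← e1, hw]⟩

theorem RECTB (hR : IsChuteRect n P a b c d) {i j p q : ℕ}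
    (hcr : CrossAt n P i j p q) (hi1 : a ≤ i) (hi2 : i ≤ b) (hj1 : c ≤ j) (hj2 : j ≤ d) :
    (i = a ∧ j = d ∧ PairIs (westLabel n P b c) (northLabel n P (b+1) c) p q) ∨
    (i = a ∧ c < j ∧ j < d ∧ PairIs (westLabel n P b c) (northLabel n P (b+1) j) p q) ∨
    (i = b ∧ c < j ∧ j < d ∧ PairIs (northLabel n P (b+1) c) (northLabel n P (b+1) j) p q) ∨
    (a < i ∧ i < b ∧ j = c ∧ PairIs (westLabel n P i c) (westLabel n P b c) p q) ∨
    (a < i ∧ i < b ∧ j = d ∧ PairIs (westLabel n P i c) (northLabel n P (b+1) c) p q) ∨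
    (a < i ∧ i < b ∧ c < j ∧ j < d ∧ PairIs (westLabel n P i c) (northLabel n P (b+1) j) p q) := by
  have hR' := hR
  obtain ⟨ha1, hab, hc1, hcd, hbd, hPac, hPbc, hPbd, hcr'⟩ := hR'
  have hPt := hcr.2.2.2.1
  rcases Nat.lt_trichotomy i a with h | h | h
  · omega
  case inr.inl =>
    -- i = a
    subst h
    rcases Nat.eq_or_lt_of_le hj1 with hc' | hc'
    · rw [← hc'] at hPt; rw [hPt] at hPac; cases hPac
    rcases Nat.eq_or_lt_of_le hj2 with hd' | hd'
    · subst hd'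
      exact Or.inl ⟨rfl, rfl, pairIs_of_cross hcr (B13 hR j hc' le_rfl) (B11 hR i le_rfl hab)⟩
    · exact Or.inr (Or.inl ⟨rfl, hc', hd',
        pairIs_of_cross hcr (B13 hR j hc' (by omega)) (B7 hR i j le_rfl (by omega) hc' hd')⟩)
  case inr.inr =>
    rcases Nat.lt_trichotomy i b with hb' | hb' | hb'
    · -- a < i < b
      rcases Nat.eq_or_lt_of_le hj1 with hc' | hc'
      · exact Or.inr (Or.inr (Or.inr (Or.inl ⟨h, hb', hc'.symm,
          pairIs_of_cross hcr (by rw [← hc']) (by rw [← hc']; exact B2 hR i (by omega) hb')⟩)))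
      rcases Nat.eq_or_lt_of_le hj2 with hd' | hd'
      · subst hd'
        exact Or.inr (Or.inr (Or.inr (Or.inr (Or.inl ⟨h, hb', rfl,
          pairIs_of_cross hcr (B8 hR i j h hb' (by omega) le_rfl) (B11 hR i (by omega) hb')⟩))))
      · exact Or.inr (Or.inr (Or.inr (Or.inr (Or.inr ⟨h, hb', hc', hd',
          pairIs_of_cross hcr (B8 hR i j h hb' (by omega) (by omega))
            (B7 hR i j (by omega) (by omega) hc' hd')⟩))))
    · -- i = b
      subst hb'
      rcases Nat.eq_or_lt_of_le hj1 with hc' | hc'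
      · rw [← hc'] at hPt; rw [hPt] at hPbc; cases hPbc
      rcases Nat.eq_or_lt_of_le hj2 with hd' | hd'
      · subst hd'; rw [hPt] at hPbd; cases hPbd
      · exact Or.inr (Or.inr (Or.inl ⟨rfl, hc', hd',
          pairIs_of_cross hcr (B4 hR j hc' (by omega)) rfl⟩))
    · omega

theorem RECTA (hR : IsChuteRect n P a b c d) {i j p q : ℕ}
    (hcr : CrossAt n (chuteResult P a b c d) i j p q)
    (hi1 : a ≤ i) (hi2 : i ≤ b) (hj1 : c ≤ j) (hj2 : j ≤ d) :
    (i = b ∧ j = c ∧ PairIs (westLabel n P b c) (northLabel n P (b+1) c) p q) ∨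
    (i = b ∧ c < j ∧ j < d ∧ PairIs (westLabel n P b c) (northLabel n P (b+1) j) p q) ∨
    (i = a ∧ c < j ∧ j < d ∧ PairIs (northLabel n P (b+1) c) (northLabel n P (b+1) j) p q) ∨
    (a < i ∧ i < b ∧ j = c ∧ PairIs (westLabel n P i c) (northLabel n P (b+1) c) p q) ∨
    (a < i ∧ i < b ∧ j = d ∧ PairIs (westLabel n P i c) (westLabel n P b c) p q) ∨
    (a < i ∧ i < b ∧ c < j ∧ j < d ∧ PairIs (westLabel n P i c) (northLabel n P (b+1) j) p q) := by
  have hR' := hR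
  obtain ⟨ha1, hab, hc1, hcd, hbd, hPac, hPbc, hPbd, hcr'⟩ := hR'
  have hPt := hcr.2.2.2.1
  rcases Nat.lt_trichotomy i a with h | h | h
  · omega
  case inr.inl =>
    subst h
    rcases Nat.eq_or_lt_of_le hj1 with hc' | hc'
    · rw [← hc'] at hPt
      rw [cR3 i c (by omega) (by omega)] at hPt
      rw [hPt] at hPac; cases hPac
    rcases Nat.eq_or_lt_of_le hj2 with hd' | hd'
    · subst hd'
      rw [cR2 hab] at hPt; cases hPt
    · exact Or.inr (Or.inr (Or.inl ⟨rfl, hc', hd',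
        pairIs_of_cross hcr (by rw [A9 hR j hc' (by omega)]; exact E3 hab c)
          (by rw [A5' hR i j le_rfl (by omega) hc' hd']; exact E3 hab j)⟩))
  case inr.inr =>
    rcases Nat.lt_trichotomy i b with hb' | hb' | hb'
    · rcases Nat.eq_or_lt_of_le hj1 with hc' | hc'
      · refine Or.inr (Or.inr (Or.inr (Or.inl ⟨h, hb', hc'.symm, ?_⟩)))
        refine pairIs_of_cross hcr (by rw [← hc']; exact E2 hab hcd i) ?_
        rw [← hc', A2' hR i (by omega) (by omega)]; exact E3 hab c
      rcases Nat.eq_or_lt_of_le hj2 with hd' | hd'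
      · subst hd'
        refine Or.inr (Or.inr (Or.inr (Or.inr (Or.inl ⟨h, hb', rfl, ?_⟩))))
        refine pairIs_of_cross hcr ?_ ?_
        · rw [A14 hR i j h hb' (by omega) le_rfl]; exact E2 hab hcd i
        · rw [A7' hR i (by omega) hb', A6 hR, A4 hR j (by omega) le_rfl]
          exact E2 hab hcd b
      · refine Or.inr (Or.inr (Or.inr (Or.inr (Or.inr ⟨h, hb', hc', hd', ?_⟩))))
        refine pairIs_of_cross hcr ?_ ?_
        · rw [A14 hR i j h hb' (by omega) (by omega)]; exact E2 hab hcd i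
        · rw [A5' hR i j (by omega) (by omega) hc' hd']; exact E3 hab j
    · subst hb'
      rcases Nat.eq_or_lt_of_le hj1 with hc' | hc'
      · refine Or.inl ⟨rfl, hc'.symm, ?_⟩
        refine pairIs_of_cross hcr (by rw [← hc']; exact E2 hab hcd i) ?_
        rw [← hc', south_eq_north]; exact E3 hab c
      rcases Nat.eq_or_lt_of_le hj2 with hd' | hd'
      · subst hd'
        rw [cR3 i j (by omega) (by omega)] at hPt
        rw [hPt] at hPbd; cases hPbd
      · refine Or.inr (Or.inl ⟨rfl, hc', hd', ?_⟩)
        refine pairIs_of_cross hcr ?_ ?_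
        · rw [A4 hR j (by omega) (by omega)]; exact E2 hab hcd i
        · rw [south_eq_north]; exact E3 hab j
    · omega
end

section
variable {n : ℕ} {P : ℕ → ℕ → Bool} {a b c d : ℕ}

theorem TQELSE (hR : IsChuteRect n P a b c d) (hredP : Reduced n P)
    (hredP' : Reduced n (chuteResult P a b c d)) (p q : ℕ)
    (e1 : ¬ PairIs (westLabel n P b c) (northLabel n P (b+1) c) p q)
    (e2 : ∀ j, c < j → j < d → ¬ PairIs (westLabel n P b c) (northLabel n P (b+1) j) p q)
    (e3 : ∀ j, c < j → j < d → ¬ PairIs (northLabel n P (b+1) c) (northLabel n P (b+1) j) p q) :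
    theta n (chuteResult P a b c d) p q = theta n P p q := by
  by_cases h0 : theta n P p q = 0
  · rw [h0]
    by_contra h0'
    obtain ⟨j0, hcr'⟩ := theta_spec p q h0'
    set i0 := theta n (chuteResult P a b c d) p q with hi0
    by_cases hrect : a ≤ i0 ∧ i0 ≤ b ∧ c ≤ j0 ∧ j0 ≤ d
    · rcases RECTA hR hcr' hrect.1 hrect.2.1 hrect.2.2.1 hrect.2.2.2 with
        ⟨_, _, hp⟩ | ⟨_, g1, g2, hp⟩ | ⟨_, g1, g2, hp⟩ |
        ⟨g1, g2, _, hp⟩ | ⟨g1, g2, _, hp⟩ | ⟨g1, g2, g3, g4, hp⟩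
      · exact e1 hp
      · exact e2 j0 g1 g2 hp
      · exact e3 j0 g1 g2 hp
      · exact absurd h0 (theta_ne_zero_of_cross (cross_of_pairIs (XB5 hR i0 g1 g2) hp))
      · exact absurd h0 (theta_ne_zero_of_cross (cross_of_pairIs (XB4 hR i0 g1 g2) hp))
      · exact absurd h0 (theta_ne_zero_of_cross (cross_of_pairIs (XB6 hR i0 j0 g1 g2 g3 g4) hp))
    · exact absurd h0 (theta_ne_zero_of_cross ((CROSSOUT hR i0 j0 p q hrect).2 hcr'))
  · obtain ⟨j0, hcrP⟩ := theta_spec p q h0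
    set i0 := theta n P p q with hi0
    by_cases hrect : a ≤ i0 ∧ i0 ≤ b ∧ c ≤ j0 ∧ j0 ≤ d
    · rcases RECTB hR hcrP hrect.1 hrect.2.1 hrect.2.2.1 hrect.2.2.2 with
        ⟨_, _, hp⟩ | ⟨_, g1, g2, hp⟩ | ⟨_, g1, g2, hp⟩ |
        ⟨g1, g2, _, hp⟩ | ⟨g1, g2, _, hp⟩ | ⟨g1, g2, g3, g4, hp⟩
      · exact absurd hp e1
      · exact absurd hp (e2 j0 g1 g2)
      · exact absurd hp (e3 j0 g1 g2)
      · exact theta_eq_of_cross hredP' (cross_of_pairIs (XA5 hR i0 g1 g2) hp)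
      · exact theta_eq_of_cross hredP' (cross_of_pairIs (XA4 hR i0 g1 g2) hp)
      · exact theta_eq_of_cross hredP' (cross_of_pairIs (XA6 hR i0 j0 g1 g2 g3 g4) hp)
    · exact theta_eq_of_cross hredP' ((CROSSOUT hR i0 j0 p q hrect).1 hcrP)
end

section

theorem cf_le (e e' : ℕ) (f f' : ℕ → Prop) {hf : DecidablePred f} {hf' : DecidablePred f'}
    (himp : ∀ k, 1 ≤ k → k < e → f k → (k < e' ∧ f' k)) :
    ((Finset.Ico 1 e).filter f).card ≤ ((Finset.Ico 1 e').filter f').card := by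
  letI := hf; letI := hf'
  apply Finset.card_le_card
  intro x hx
  rw [Finset.mem_filter, Finset.mem_Ico] at hx ⊢
  obtain ⟨⟨h1, h2⟩, h3⟩ := hx
  obtain ⟨h4, h5⟩ := himp x h1 h2 h3
  exact ⟨⟨h1, h4⟩, h5⟩

theorem cf_eq (e e' : ℕ) (f f' : ℕ → Prop) {hf : DecidablePred f} {hf' : DecidablePred f'}
    (hee : e = e') (hiff : ∀ k, 1 ≤ k → k < e → (f k ↔ f' k)) :
    ((Finset.Ico 1 e).filter f).card = ((Finset.Ico 1 e').filter f').card := by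
  letI := hf; letI := hf'
  subst hee
  apply le_antisymm
  · exact cf_le e e f f' (fun k u1 u2 u3 => ⟨u2, (hiff k u1 u2).1 u3⟩)
  · exact cf_le e e f' f (fun k u1 u2 u3 => ⟨u2, (hiff k u1 u2).2 u3⟩)

theorem cf_step (e e' aa bb : ℕ) (hee : e = e') (h1a : 1 ≤ aa) (hab : aa < bb)
    (f f' : ℕ → Prop) {hf : DecidablePred f} {hf' : DecidablePred f'}
    (hnfa : ¬ f aa) (hf'a : f' aa)
    (hiff : ∀ k, k ≠ aa → k ≠ bb → (f k ↔ f' k)) :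
    ((Finset.Ico 1 e).filter f).card ≤ ((Finset.Ico 1 e').filter f').card := by
  letI := hf; letI := hf'
  subst hee
  by_cases hb : bb ∈ (Finset.Ico 1 e).filter f
  · have hae : aa ∈ Finset.Ico 1 e := by
      rw [Finset.mem_filter, Finset.mem_Ico] at hb
      rw [Finset.mem_Ico]
      omega
    have hsub : insert aa (((Finset.Ico 1 e).filter f).erase bb)
        ⊆ (Finset.Ico 1 e).filter f' := by
      intro x hx
      rcases Finset.mem_insert.1 hx with rfl | hx
      · exact Finset.mem_filter.2 ⟨hae, hf'a⟩
      · have hxb := Finset.ne_of_mem_erase hx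
        have hxf := Finset.mem_filter.1 (Finset.mem_of_mem_erase hx)
        have hxa : x ≠ aa := by
          rintro rfl; exact hnfa hxf.2
        exact Finset.mem_filter.2 ⟨hxf.1, (hiff x hxa hxb).1 hxf.2⟩
    have hanotin : aa ∉ ((Finset.Ico 1 e).filter f).erase bb := by
      intro h
      exact hnfa (Finset.mem_filter.1 (Finset.mem_of_mem_erase h)).2
    have h1 := Finset.card_le_card hsub
    rw [Finset.card_insert_of_notMem hanotin, Finset.card_erase_of_mem hb] at h1
    have hpos : 1 ≤ ((Finset.Ico 1 e).filter f).card :=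
      Finset.card_pos.2 ⟨bb, hb⟩
    omega
  · apply Finset.card_le_card
    intro x hx
    have hxf := Finset.mem_filter.1 hx
    have hxb : x ≠ bb := by rintro rfl; exact hb hx
    have hxa : x ≠ aa := by rintro rfl; exact hnfa hxf.2
    exact Finset.mem_filter.2 ⟨hxf.1, (hiff x hxa hxb).1 hxf.2⟩

theorem lehmer_mono_abstract (T T' : ℕ → ℕ → ℕ) (sg tu aa bb : ℕ) (V : Finset ℕ)
    (hst : sg < tu) (hab : aa < bb) (h1s : 1 ≤ sg) (h1a : 1 ≤ aa)
    (htV : ∀ v ∈ V, tu < v)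
    (hT1 : T sg tu = aa) (hT1' : T' sg tu = bb)
    (hT2 : ∀ v ∈ V, T sg v = aa) (hT2' : ∀ v ∈ V, T' sg v = bb)
    (hT3 : ∀ v ∈ V, T tu v = bb) (hT3' : ∀ v ∈ V, T' tu v = aa)
    (helse : ∀ x m, x < m → ¬(x = sg ∧ m = tu) → ¬(x = sg ∧ m ∈ V) → ¬(x = tu ∧ m ∈ V) →
      T' x m = T x m)
    (hmidV : ∀ v ∈ V, ∀ k, aa < k → k < bb → ∃ hh, 1 ≤ hh ∧ hh < sg ∧ T hh v = k)
    (huniqt : ∀ x, 1 ≤ x → x < tu → x ≠ sg → T x tu ≠ aa)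
    (huniqV : ∀ v ∈ V, ∀ x, 1 ≤ x → x < tu → x ≠ sg → T x v ≠ aa) :
    ∀ i m, i < m → lehmer T i m ≤ lehmer T' i m := by
  intro i m him
  have htunotV : tu ∉ V := fun h => absurd (htV tu h) (lt_irrefl tu)
  unfold lehmer
  by_cases hmt : m = tu
  · subst hmt
    rcases Nat.lt_trichotomy i sg with his | his | his
    · -- i < sg : untouched
      apply le_of_eq
      apply cf_eq
      · exact (helse i m (by omega) (by omega) (fun h => by omega) (fun h => by omega)).symm
      · intro k _ _
        constructor
        · intro H x h1 h2
          rw [helse x m (by omega) (by omega) (fun h => by omega) (fun h => by omega)]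
          exact H x h1 h2
        · intro H x h1 h2
          have := H x h1 h2
          rw [helse x m (by omega) (by omega) (fun h => by omega) (fun h => by omega)] at this
          exact this
    · -- i = sg : entry increases
      subst his
      apply cf_le
      intro k hk1 hk2 hk3
      rw [hT1] at hk2
      rw [hT1']
      refine ⟨by omega, fun x h1 h2 => ?_⟩
      rw [helse x m (by omega) (by omega) (fun h => by omega) (fun h => by omega)]
      exact hk3 x h1 h2
    · -- sg < i (< tu)
      apply cf_step _ _ aa bb
        (helse i m (by omega) (by omega) (fun h => by omega) (fun h => by omega)).symm h1a hab
      · intro H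
        exact H sg h1s his hT1
      · intro x h1 h2
        by_cases hxs : x = sg
        · subst hxs; rw [hT1']; omega
        · rw [helse x m (by omega) (by omega) (fun h => by omega) (fun h => by omega)]
          exact huniqt x h1 (by omega) hxs
      · intro k hka hkb
        constructor
        · intro H x h1 h2
          by_cases hxs : x = sg
          · subst hxs; rw [hT1']; omega
          · rw [helse x m (by omega) (by omega) (fun h => by omega) (fun h => by omega)]
            exact H x h1 h2
        · intro H x h1 h2
          by_cases hxs : x = sg
          · subst hxs; rw [hT1]; omega
          · have := H x h1 h2
            rw [helse x m (by omega) (by omega) (fun h => by omega) (fun h => by omega)] at this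
            exact this
  by_cases hmV : m ∈ V
  · have htm : tu < m := htV m hmV
    have hsm : sg < m := lt_trans hst htm
    rcases Nat.lt_trichotomy i sg with his | his | his
    · apply le_of_eq
      apply cf_eq
      · exact (helse i m (by omega) (fun h => by omega) (fun h => by omega) (fun h => by omega)).symm
      · intro k _ _
        constructor
        · intro H x h1 h2
          rw [helse x m (by omega) (fun h => by omega) (fun h => by omega) (fun h => by omega)]
          exact H x h1 h2
        · intro H x h1 h2
          have := H x h1 h2
          rw [helse x m (by omega) (fun h => by omega) (fun h => by omega) (fun h => by omega)] at this
          exact this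
    · -- i = sg
      subst his
      apply cf_le
      intro k hk1 hk2 hk3
      rw [hT2 m hmV] at hk2
      rw [hT2' m hmV]
      refine ⟨by omega, fun x h1 h2 => ?_⟩
      rw [helse x m (by omega) (fun h => by omega) (fun h => by omega) (fun h => by omega)]
      exact hk3 x h1 h2
    rcases Nat.lt_trichotomy i tu with hit | hit | hit
    · -- sg < i < tu
      apply cf_step _ _ aa bb
        (helse i m (by omega) (fun h => by omega) (fun h => by omega) (fun h => by omega)).symm h1a hab
      · intro H
        exact H sg h1s his (hT2 m hmV)
      · intro x h1 h2
        by_cases hxs : x = sg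
        · subst hxs; rw [hT2' m hmV]; omega
        · rw [helse x m (by omega) (fun h => by omega) (fun h => by omega) (fun h => by omega)]
          exact huniqV m hmV x h1 (by omega) hxs
      · intro k hka hkb
        constructor
        · intro H x h1 h2
          by_cases hxs : x = sg
          · subst hxs; rw [hT2' m hmV]; omega
          · rw [helse x m (by omega) (fun h => by omega) (fun h => by omega) (fun h => by omega)]
            exact H x h1 h2
        · intro H x h1 h2
          by_cases hxs : x = sg
          · subst hxs; rw [hT2 m hmV]; omega
          · have := H x h1 h2
            rw [helse x m (by omega) (fun h => by omega) (fun h => by omega) (fun h => by omega)] at this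
            exact this
    · -- i = tu : entry decreases bb → aa, count preserved
      subst hit
      apply cf_le
      intro k hk1 hk2 hk3
      rw [hT3 m hmV] at hk2
      rw [hT3' m hmV]
      have hklta : k < aa := by
        rcases Nat.lt_trichotomy k aa with h | h | h
        · exact h
        · exfalso; exact hk3 sg h1s hst (by rw [hT2 m hmV, h])
        · exfalso
          obtain ⟨hh, g1, g2, g3⟩ := hmidV m hmV k h hk2
          exact hk3 hh g1 (by omega) g3
      refine ⟨hklta, fun x h1 h2 => ?_⟩
      by_cases hxs : x = sg
      · subst hxs; rw [hT2' m hmV]; omega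
      · rw [helse x m (by omega) (fun h => by omega) (fun h => by omega) (fun h => by omega)]
        exact hk3 x h1 h2
    · -- tu < i : blocked set permuted
      apply le_of_eq
      apply cf_eq
      · exact (helse i m (by omega) (fun h => by omega) (fun h => by omega) (fun h => by omega)).symm
      · intro k _ _
        constructor
        · intro H x h1 h2
          by_cases hxs : x = sg
          · subst hxs
            rw [hT2' m hmV]
            have := H tu (by omega) hit
            rw [hT3 m hmV] at this
            exact this
          by_cases hxt : x = tu
          · subst hxt
            rw [hT3' m hmV]
            have := H sg h1s (by omega)
            rw [hT2 m hmV] at this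
            exact this
          · rw [helse x m (by omega) (fun h => by omega) (fun h => by omega) (fun h => by omega)]
            exact H x h1 h2
        · intro H x h1 h2
          by_cases hxs : x = sg
          · subst hxs
            rw [hT2 m hmV]
            have := H tu (by omega) hit
            rw [hT3' m hmV] at this
            exact this
          by_cases hxt : x = tu
          · subst hxt
            rw [hT3 m hmV]
            have := H sg h1s (by omega)
            rw [hT2' m hmV] at this
            exact this
          · have := H x h1 h2
            rw [helse x m (by omega) (fun h => by omega) (fun h => by omega) (fun h => by omega)] at this
            exact this
  · -- untouched column
    apply le_of_eq
    apply cf_eq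
    · exact (helse i m (by omega) (fun h => absurd h.2 hmt) (fun h => absurd h.2 hmV)
        (fun h => absurd h.2 hmV)).symm
    · intro k _ _
      constructor
      · intro H x h1 h2
        rw [helse x m (by omega) (fun h => absurd h.2 hmt) (fun h => absurd h.2 hmV)
          (fun h => absurd h.2 hmV)]
        exact H x h1 h2
      · intro H x h1 h2
        have := H x h1 h2
        rw [helse x m (by omega) (fun h => absurd h.2 hmt) (fun h => absurd h.2 hmV)
          (fun h => absurd h.2 hmV)] at this
        exact this
end

section
variable {n : ℕ} {P : ℕ → ℕ → Bool} {a b c d : ℕ}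

theorem step_mono (hR : IsChuteRect n P a b c d) (hredP : Reduced n P)
    (hredP' : Reduced n (chuteResult P a b c d)) :
    ∀ i m, i < m → lehmer (theta n P) i m ≤ lehmer (theta n (chuteResult P a b c d)) i m := by
  have hR' := hR
  obtain ⟨ha1, hab, hc1, hcd, hbd, hPac, hPbc, hPbd, hcrr⟩ := hR'
  set sg := westLabel n P b c with hsg
  set tu := northLabel n P (b+1) c with htu
  set V : Finset ℕ := (Finset.Ioo c d).image (fun j => northLabel n P (b+1) j) with hV
  have memV : ∀ v, v ∈ V → ∃ j, c < j ∧ j < d ∧ northLabel n P (b+1) j = v := by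
    intro v hv
    rw [hV, Finset.mem_image] at hv
    obtain ⟨j, hj, hjv⟩ := hv
    rw [Finset.mem_Ioo] at hj
    exact ⟨j, hj.1, hj.2, hjv⟩
  -- the orderings
  have hst : sg < tu := by
    have := west_lt_south_of_cross hredP a d _ _ (XB1 hR)
    rw [B13 hR d hcd le_rfl, B11 hR a le_rfl hab] at this
    exact this
  have htV : ∀ v ∈ V, tu < v := by
    intro v hv
    obtain ⟨j, hj1, hj2, rfl⟩ := memV v hv
    have := west_lt_south_of_cross hredP b j _ _ (XB3 hR j hj1 hj2)
    rw [B4 hR j hj1 (by omega)] at this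
    exact this
  have h1s : 1 ≤ sg := le_trans (by omega) (row_le_west b c)
  -- values
  have hT1 : theta n P sg tu = a := theta_eq_of_cross hredP (XB1 hR)
  have hT1' : theta n (chuteResult P a b c d) sg tu = b :=
    theta_eq_of_cross hredP' (XA1 hR)
  have hT2 : ∀ v ∈ V, theta n P sg v = a := by
    intro v hv; obtain ⟨j, hj1, hj2, rfl⟩ := memV v hv
    exact theta_eq_of_cross hredP (XB2 hR j hj1 hj2)
  have hT2' : ∀ v ∈ V, theta n (chuteResult P a b c d) sg v = b := by
    intro v hv; obtain ⟨j, hj1, hj2, rfl⟩ := memV v hv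
    exact theta_eq_of_cross hredP' (XA2 hR j hj1 hj2)
  have hT3 : ∀ v ∈ V, theta n P tu v = b := by
    intro v hv; obtain ⟨j, hj1, hj2, rfl⟩ := memV v hv
    exact theta_eq_of_cross hredP (XB3 hR j hj1 hj2)
  have hT3' : ∀ v ∈ V, theta n (chuteResult P a b c d) tu v = a := by
    intro v hv; obtain ⟨j, hj1, hj2, rfl⟩ := memV v hv
    exact theta_eq_of_cross hredP' (XA3 hR j hj1 hj2)
  -- unchanged entries
  have helse : ∀ x m, x < m → ¬(x = sg ∧ m = tu) → ¬(x = sg ∧ m ∈ V) →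
      ¬(x = tu ∧ m ∈ V) → theta n (chuteResult P a b c d) x m = theta n P x m := by
    intro x m hxm g1 g2 g3
    apply TQELSE hR hredP hredP'
    · rintro (⟨rfl, rfl⟩ | ⟨rfl, rfl⟩)
      · exact g1 ⟨rfl, rfl⟩
      · omega
    · intro j hj1 hj2 hp
      have hmem : northLabel n P (b+1) j ∈ V := by
        rw [hV, Finset.mem_image]
        exact ⟨j, Finset.mem_Ioo.2 ⟨hj1, hj2⟩, rfl⟩
      rcases hp with ⟨rfl, rfl⟩ | ⟨rfl, rfl⟩
      · exact g2 ⟨rfl, hmem⟩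
      · have := htV _ hmem; omega
    · intro j hj1 hj2 hp
      have hmem : northLabel n P (b+1) j ∈ V := by
        rw [hV, Finset.mem_image]
        exact ⟨j, Finset.mem_Ioo.2 ⟨hj1, hj2⟩, rfl⟩
      rcases hp with ⟨rfl, rfl⟩ | ⟨rfl, rfl⟩
      · exact g3 ⟨rfl, hmem⟩
      · have := htV _ hmem; omega
  -- intermediate values below
  have hmidV : ∀ v ∈ V, ∀ k, a < k → k < b →
      ∃ hh, 1 ≤ hh ∧ hh < sg ∧ theta n P hh v = k := by
    intro v hv k hk1 hk2
    obtain ⟨j, hj1, hj2, rfl⟩ := memV v hv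
    refine ⟨westLabel n P k c, le_trans (by omega) (row_le_west k c), ?_, ?_⟩
    · have := west_lt_south_of_cross hredP k c _ _ (XB4 hR k hk1 hk2)
      rw [B2 hR k (by omega) hk2] at this
      exact this
    · exact theta_eq_of_cross hredP (XB6 hR k j hk1 hk2 hj1 hj2)
  -- uniqueness of the value a in the changed columns
  have hstair : a + d ≤ n := by omega
  have huniqt : ∀ x, 1 ≤ x → x < tu → x ≠ sg → theta n P x tu ≠ a := by
    intro x hx1 hx2 hx3 hth
    have hne : theta n P x tu ≠ 0 := by omega
    obtain ⟨y, hcr⟩ := theta_spec x tu hne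
    rw [hth] at hcr
    obtain ⟨u1, u2, u3, u4, u5⟩ := hcr
    rcases u5 with ⟨e1, e2⟩ | ⟨e1, e2⟩
    · -- south(a,y) = tu
      have hnad : southLabel n P a d = tu := B11 hR a le_rfl hab
      have hkey : northLabel n P (a+1) y = northLabel n P (a+1) d :=
        ((south_eq_north a y).symm.trans e2).trans
          (((south_eq_north a d).symm.trans hnad).symm)
      have hyd : y = d :=
        north_inj_row (a+1) y d (by omega) (by omega) u2 (by omega)
          (by omega) (by omega) hkey
      rw [hyd, B13 hR d hcd le_rfl] at e1
      exact hx3 e1.symm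
    · -- west(a,y) = tu : contradiction with west < south
      have := west_lt_south_of_cross hredP a y x tu ⟨u1, u2, u3, u4, Or.inr ⟨e1, e2⟩⟩
      rw [e1, e2] at this
      omega
  have huniqV : ∀ v ∈ V, ∀ x, 1 ≤ x → x < tu → x ≠ sg → theta n P x v ≠ a := by
    intro v hv x hx1 hx2 hx3 hth
    obtain ⟨j, hj1, hj2, rfl⟩ := memV v hv
    have hne : theta n P x (northLabel n P (b+1) j) ≠ 0 := by omega
    obtain ⟨y, hcr⟩ := theta_spec x _ hne
    rw [hth] at hcr
    obtain ⟨u1, u2, u3, u4, u5⟩ := hcr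
    rcases u5 with ⟨e1, e2⟩ | ⟨e1, e2⟩
    · have hnad : southLabel n P a j = northLabel n P (b+1) j :=
        B7 hR a j le_rfl (by omega) hj1 hj2
      have hkey : northLabel n P (a+1) y = northLabel n P (a+1) j :=
        ((south_eq_north a y).symm.trans e2).trans
          (((south_eq_north a j).symm.trans hnad).symm)
      have hyj : y = j :=
        north_inj_row (a+1) y j (by omega) (by omega) u2 (by omega)
          (by omega) (by omega) hkey
      rw [hyj, B13 hR j hj1 (by omega)] at e1
      exact hx3 e1.symm
    · have := west_lt_south_of_cross hredP a y x _ ⟨u1, u2, u3, u4, Or.inr ⟨e1, e2⟩⟩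
      rw [e1, e2] at this
      have := htV _ hv
      omega
  exact lehmer_mono_abstract (theta n P) (theta n (chuteResult P a b c d)) sg tu a b V
    hst hab h1s ha1 htV hT1 hT1' hT2 hT2' hT3 hT3' helse hmidV huniqt huniqV
end


/-- If `P ≤_chute Q` then `Φ(P) ≤ Φ(Q)` componentwise. -/
theorem phi_monotone {n : ℕ} (w : Equiv.Perm (Fin n)) (P Q : RPD w)
    (h : chuteLE w P Q) :
    ∀ i j, IsInv w i j → phi n P.1 i j ≤ phi n Q.1 i j := by
  intro i j hinv
  have hij : i < j := hinv.2.1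
  unfold chuteLE at h
  induction h with
  | refl => exact le_rfl
  | @tail X Y h1 h2 ih =>
    obtain ⟨aa, bb, cc, dd, hRect, hres⟩ := h2
    have hred1 : Reduced n X.1 := X.2.2
    have hred2 : Reduced n Y.1 := Y.2.2
    rw [hres] at hred2
    have hstep := step_mono hRect hred1 hred2 i j hij
    refine le_trans ih ?_
    show lehmer (theta n X.1) i j ≤ lehmer (theta n Y.1) i j
    rw [hres]
    exact hstep
end

section
/- A finite lattice Q is meet-semidistributive if and only if for every cover relation α ⋖ β in Q, the set {γ ∈ Q : γ ∧ β = α} has a maximum element. -/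
/-- A finite lattice `Q` is meet-semidistributive iff for every cover
relation `α ⋖ β` the set `{γ : γ ⊓ β = α}` has a maximum element. -/
theorem meetSemidistrib_iff_covers {Q : Type*} [Lattice Q] [Fintype Q] :
    (∀ α β : Q, α ≤ β → ∃ μ, μ ⊓ β = α ∧ ∀ γ, γ ⊓ β = α → γ ≤ μ) ↔
      ∀ α β : Q, α ⋖ β → ∃ μ, μ ⊓ β = α ∧ ∀ γ, γ ⊓ β = α → γ ≤ μ := by
  classical
  constructor
  · intro h α β hab
    exact h α β hab.le
  · intro h α β hab
    -- the set is closed under joins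
    have key : ∀ γ₁ γ₂ : Q, γ₁ ⊓ β = α → γ₂ ⊓ β = α → (γ₁ ⊔ γ₂) ⊓ β = α := by
      intro γ₁ γ₂ h1 h2
      have hα1 : α ≤ γ₁ := by rw [← h1]; exact inf_le_left
      refine le_antisymm ?_ (le_inf (hα1.trans le_sup_left) hab)
      by_contra hcon
      set e := (γ₁ ⊔ γ₂) ⊓ β with he
      have hae : α < e :=
        lt_of_le_of_ne (le_inf (hα1.trans le_sup_left) hab) (fun hh => hcon hh.ge)
      obtain ⟨d, hd, hde⟩ := hae.exists_covby_le
      have hdβ : d ≤ β := hde.trans inf_le_right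
      obtain ⟨κ, hκ, hκmax⟩ := h α d hd
      have hg1 : γ₁ ≤ κ := by
        apply hκmax
        calc γ₁ ⊓ d = (γ₁ ⊓ β) ⊓ d := by rw [inf_assoc, inf_eq_right.mpr hdβ]
        _ = α := by rw [h1, inf_eq_left.mpr hd.le]
      have hg2 : γ₂ ≤ κ := by
        apply hκmax
        calc γ₂ ⊓ d = (γ₂ ⊓ β) ⊓ d := by rw [inf_assoc, inf_eq_right.mpr hdβ]
        _ = α := by rw [h2, inf_eq_left.mpr hd.le]
      have hdκ : d ≤ κ := hde.trans (inf_le_left.trans (sup_le hg1 hg2))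
      have : d = α := by rw [← hκ, inf_eq_right.mpr hdκ]
      exact hd.ne' this
    -- take the sup of the (nonempty, finite) set
    set S : Finset Q := Finset.univ.filter (fun γ => γ ⊓ β = α) with hS
    have hαS : α ∈ S := by
      simp [hS, inf_eq_left.mpr hab]
    have hne : S.Nonempty := ⟨α, hαS⟩
    refine ⟨S.sup' hne id, ?_, ?_⟩
    · refine Finset.sup'_induction hne id (fun a ha b hb => key a b ha hb) ?_
      intro γ hγ
      simpa [hS] using hγ
    · intro γ hγ
      have hmem : γ ∈ S := by simp [hS, hγ]
      exact Finset.le_sup' id hmem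
end

section
/- Let w ∈ S_n and let T, T' be inversions tableaux for w with T' = ↑_M T where M is a multiset supported on exactly one box (x₀,n) with multiplicity m ≥ 1. Then ↑_{(x₀,n)} T (incrementing the box once) is again an inversions tableau for w. -/
open Classical

noncomputable section

/-- Extract the first step of a chain of increments all at the same box. -/
lemma IncBy.first {x₀ n m : ℕ} {T T' : ℕ → ℕ → ℕ}
    (h : IncBy (Multiset.replicate (m + 1) (x₀, n)) T T') :
    ∃ T₁, IncrementAt T T₁ x₀ n ∧ IncBy (Multiset.replicate m (x₀, n)) T₁ T' := by
  generalize hN : Multiset.replicate (m + 1) (x₀, n) = N at h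
  cases h with
  | nil T => simp at hN
  | @cons M S S₁ S' i j h1 h2 =>
    have hmem : (i, j) = (x₀, n) :=
      Multiset.eq_of_mem_replicate (n := m + 1) (by rw [hN]; exact Multiset.mem_cons_self _ _)
    injection hmem.symm with hi hj
    subst hi; subst hj
    rw [Multiset.replicate_succ] at hN
    have hM : M = Multiset.replicate m (x₀, n) := ((Multiset.cons_inj_right _).mp hN).symm
    exact ⟨S₁, h1, hM ▸ h2⟩

/-- Basic facts preserved along a chain of increments, all at box `(x₀, n)`. -/
lemma chain_facts {x₀ n : ℕ} {M : Multiset (ℕ × ℕ)} {S S' : ℕ → ℕ → ℕ}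
    (h : IncBy M S S') :
    (∀ p ∈ M, p = (x₀, n)) →
    S x₀ n ≤ S' x₀ n ∧
    (∀ r c, c ≠ n → S' r c = S r c) ∧
    (∀ r, r < x₀ → S' r n = S r n) ∧
    (∀ r, r ≠ x₀ → S r n ≤ S x₀ n → S' r n = S r n) := by
  induction h with
  | nil T => exact fun _ => ⟨le_rfl, fun _ _ _ => rfl, fun _ _ => rfl, fun _ _ _ => rfl⟩
  | @cons M S S₁ S' i j h1 h2 ih =>
    intro hall
    have hij : (i, j) = (x₀, n) := hall _ (Multiset.mem_cons_self _ _)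
    injection hij.symm with hi hj
    subst hi; subst hj
    obtain ⟨IH1, IH2, IH3, IH4⟩ := ih (fun p hp => hall p (Multiset.mem_cons_of_mem hp))
    obtain ⟨b, hab, -, -, hcase⟩ := h1
    rcases hcase with ⟨-, hdef⟩ | ⟨i'', hlt, hval, hdef⟩
    · -- pure increment
      have ex : S₁ x₀ n = b := by rw [hdef]; simp
      have eo : ∀ r c, ¬(r = x₀ ∧ c = n) → S₁ r c = S r c := by
        intro r c hrc; simp only [hdef]; rw [if_neg hrc]
      refine ⟨?_, ?_, ?_, ?_⟩
      · calc S x₀ n ≤ b := hab.le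
          _ = S₁ x₀ n := ex.symm
          _ ≤ S' x₀ n := IH1
      · intro r c hc; rw [IH2 r c hc, eo r c (fun hh => hc hh.2)]
      · intro r hr
        have hrx : r ≠ x₀ := Nat.ne_of_lt hr
        rw [IH3 r hr, eo r n (fun hh => hrx hh.1)]
      · intro r hr hle
        have e : S₁ r n = S r n := eo r n (fun hh => hr hh.1)
        rw [IH4 r hr (by rw [e, ex]; omega), e]
    · -- trade increment
      have hix : i'' ≠ x₀ := by omega
      have ex : S₁ x₀ n = b := by rw [hdef]; simp
      have eo : ∀ r c, ¬(r = x₀ ∧ c = n) → ¬(r = i'' ∧ c = n) → S₁ r c = S r c := by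
        intro r c h1' h2'; simp only [hdef]; rw [if_neg h1', if_neg h2']
      refine ⟨?_, ?_, ?_, ?_⟩
      · calc S x₀ n ≤ b := hab.le
          _ = S₁ x₀ n := ex.symm
          _ ≤ S' x₀ n := IH1
      · intro r c hc
        rw [IH2 r c hc, eo r c (fun hh => hc hh.2) (fun hh => hc hh.2)]
      · intro r hr
        have hrx : r ≠ x₀ := Nat.ne_of_lt hr
        have hri : r ≠ i'' := by omega
        rw [IH3 r hr, eo r n (fun hh => hrx hh.1) (fun hh => hri hh.1)]
      · intro r hr hle
        have hri : r ≠ i'' := by rintro rfl; rw [hval] at hle; omega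
        have e : S₁ r n = S r n := eo r n (fun hh => hr hh.1) (fun hh => hri hh.1)
        rw [IH4 r hr (by rw [e, ex]; omega), e]

/-- If `T' = ↑_M T` where `M` is supported on the single box `(x₀,n)`
with multiplicity `m ≥ 1`, then incrementing `(x₀,n)` once yields an
inversions tableau. -/
theorem invTab_of_increment_lastCol {n : ℕ} (w : Equiv.Perm (Fin n))
    (T T' : ℕ → ℕ → ℕ) (hT : InvTab w T) (hT' : InvTab w T')
    (x₀ m : ℕ) (hm : 1 ≤ m)
    (hM : IncBy (Multiset.replicate m (x₀, n)) T T') :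
    ∀ T'', IncrementAt T T'' x₀ n → InvTab w T'' := by
  obtain ⟨m', rfl⟩ : ∃ m', m = m' + 1 := ⟨m - 1, by omega⟩
  obtain ⟨T₁, h1, rest⟩ := IncBy.first hM
  obtain ⟨⟨hTnz, hTcol⟩, hTbal, hTrow⟩ := hT
  obtain ⟨⟨hT'nz, hT'col⟩, hT'bal, hT'row⟩ := hT'
  obtain ⟨P1, P2, P3, P4⟩ := chain_facts rest (fun p hp => Multiset.eq_of_mem_replicate hp)
  obtain ⟨b₁, hab₁, hfill₁, hnb₁, hcase₁⟩ := h1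
  have h1v : T₁ x₀ n = b₁ := by
    rcases hcase₁ with ⟨-, hdef⟩ | ⟨i'', hlt, -, hdef⟩ <;> rw [hdef] <;> simp
  have hBb : b₁ ≤ T' x₀ n := h1v ▸ P1
  have hT'ne : T' x₀ n ≠ 0 := by omega
  have inv : IsInv w x₀ n := (hT'nz x₀ n).mp hT'ne
  have ha0 : T x₀ n ≠ 0 := (hTnz x₀ n).mpr inv
  have hx1 : 1 ≤ x₀ := inv.1
  have hxn : x₀ < n := inv.2.1
  intro T'' h''
  obtain ⟨b₂, hab₂, hfill₂, hnb₂, hcase₂⟩ := h''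
  have hbb : b₂ = b₁ := by
    rcases lt_trichotomy b₂ b₁ with h | h | h
    · obtain ⟨i', hi1, hi2, hi3⟩ := hfill₁ b₂ hab₂ h
      exact absurd hi3 (hnb₂ i' hi1 hi2)
    · exact h
    · obtain ⟨i', hi1, hi2, hi3⟩ := hfill₂ b₁ hab₁ h
      exact absurd hi3 (hnb₁ i' hi1 hi2)
  obtain rfl := hbb.symm
  rcases hcase₂ with ⟨hnone₂, hdef₂⟩ | ⟨i'', hilt, hival, -⟩
  swap
  · -- the trade case is impossible
    exfalso
    have hib : T i'' n ≠ 0 := by rw [hival]; omega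
    have invi : IsInv w i'' n := (hTnz i'' n).mp hib
    have hi1 : 1 ≤ i'' := invi.1
    have hiN : i'' < n := invi.2.1
    rcases hcase₁ with ⟨hnone₁, -⟩ | ⟨j'', hjlt, hjval, hdef₁⟩
    · exact hnone₁ i'' hi1 hival
    · have hjj : j'' = i'' := by
        by_contra hne
        have hjb : T j'' n ≠ 0 := by rw [hjval]; omega
        have invj : IsInv w j'' n := (hTnz j'' n).mp hjb
        rcases lt_trichotomy j'' i'' with h | h | h
        · exact hTcol j'' i'' n invj.1 h hiN hjb hib (by rw [hival, hjval])
        · exact hne h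
        · exact hTcol i'' j'' n hi1 h invj.2.1 hib hjb (by rw [hival, hjval])
      subst hjj
      have hix : j'' ≠ x₀ := by omega
      have e2 : T₁ j'' n = T x₀ n := by rw [hdef₁]; simp [hix]
      have hjn : j'' ≠ n := by omega
      have e3 : T₁ x₀ j'' = T x₀ j'' := by rw [hdef₁]; simp [hjn, hix]
      have f2 : T' j'' n = T x₀ n := by
        rw [P4 j'' hix (by rw [e2, h1v]; omega), e2]
      have f3 : T' x₀ j'' = T x₀ j'' := by rw [P2 x₀ j'' hjn, e3]
      have hb0 := hTbal x₀ j'' n hx1 hjlt hiN le_rfl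
      have hb' := hT'bal x₀ j'' n hx1 hjlt hiN le_rfl
      simp only [LBal, min_le_iff, le_max_iff] at hb0 hb'
      rw [f2, f3] at hb'
      rw [hival] at hb0
      omega
  · -- the pure case
    rcases hcase₁ with ⟨hnone₁, hdef₁⟩ | ⟨j'', hjlt, hjval, hdef₁⟩
    swap
    · exact absurd hjval (hnone₂ j'' (by omega))
    have hTT : T'' = T₁ := by rw [hdef₂, hdef₁]
    subst hTT
    have hv : ∀ r c, T'' r c = if r = x₀ ∧ c = n then b₁ else T r c := fun r c => by
      simp only [hdef₁]
    have hvx : T'' x₀ n = b₁ := by rw [hv]; simp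
    have hP1 : b₁ ≤ T' x₀ n := hvx ▸ P1
    have hbx : b₁ ≤ x₀ := le_trans hP1 (hT'row x₀ n)
    refine ⟨⟨?_, ?_⟩, ?_, ?_⟩
    · -- nonzero iff inversion
      intro i j
      rw [hv]
      by_cases h : i = x₀ ∧ j = n
      · rw [if_pos h, h.1, h.2]
        exact ⟨fun _ => inv, fun _ => by omega⟩
      · rw [if_neg h]; exact hTnz i j
    · -- column injectivity
      intro i i' j h1' h2' h3' hnz hnz'
      by_cases hj : j = n
      · obtain rfl := hj.symm
        by_cases hi : i = x₀
        · obtain rfl := hi.symm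
          have hi' : ¬(i' = x₀ ∧ (n : ℕ) = n) := fun hh => by omega
          rw [hv, if_pos ⟨rfl, rfl⟩, hv i', if_neg hi']
          intro hEq
          exact hnone₂ i' (by omega) hEq.symm
        · by_cases hi2 : i' = x₀
          · obtain rfl := hi2.symm
            have hine : ¬(i = x₀ ∧ (n : ℕ) = n) := fun hh => hi hh.1
            rw [hv, if_neg hine, hv, if_pos ⟨rfl, rfl⟩]
            intro hEq
            exact hnone₂ i h1' hEq
          · have hine : ¬(i = x₀ ∧ (n : ℕ) = n) := fun hh => hi hh.1
            have hine' : ¬(i' = x₀ ∧ (n : ℕ) = n) := fun hh => hi2 hh.1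
            rw [hv i n, if_neg hine] at hnz
            rw [hv i' n, if_neg hine'] at hnz'
            rw [hv i n, if_neg hine, hv i' n, if_neg hine']
            exact hTcol i i' n h1' h2' h3' hnz hnz'
      · have e : ∀ r, T'' r j = T r j := fun r => by
          rw [hv, if_neg (fun hh => hj hh.2)]
        rw [e] at hnz
        rw [e] at hnz'
        rw [e, e]
        exact hTcol i i' j h1' h2' h3' hnz hnz'
    · -- balancedness
      intro i j k hi hij hjk hkn
      have e1 : T'' i j = T i j := by
        rw [hv, if_neg]; rintro ⟨rfl, rfl⟩; omega
      by_cases hk : k = n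
      · obtain rfl := hk.symm
        by_cases hix : i = x₀
        · obtain rfl := hix.symm
          have hjx : ¬(j = x₀ ∧ (n : ℕ) = n) := fun hh => by omega
          have e2 : T'' j n = T j n := by rw [hv, if_neg hjx]
          have hb0 := hTbal x₀ j n hi hij hjk hkn
          simp only [LBal, min_le_iff, le_max_iff] at hb0 ⊢
          rw [e1, e2, hvx]
          by_cases hbig : T j n < b₁ ∧ T x₀ j < b₁
          · have f2 : T' j n = T j n := by
              rw [P4 j (by omega) (by rw [e2, hvx]; omega), e2]
            have f1 : T' x₀ j = T x₀ j := by
              rw [P2 x₀ j (by omega), hv, if_neg (fun hh => by omega)]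
            have hb' := hT'bal x₀ j n hi hij hjk hkn
            simp only [LBal, min_le_iff, le_max_iff] at hb'
            rw [f1, f2] at hb'
            omega
          · omega
        · by_cases hjx : j = x₀
          · obtain rfl := hjx.symm
            have hine : ¬(i = x₀ ∧ (n : ℕ) = n) := fun hh => hix hh.1
            have e2 : T'' i n = T i n := by rw [hv, if_neg hine]
            have hb0 := hTbal i x₀ n hi hij hjk hkn
            simp only [LBal, min_le_iff, le_max_iff] at hb0 ⊢
            rw [e1, e2, hvx]
            by_cases hq : T i x₀ ≤ T i n
            · omega
            · have f1 : T' i x₀ = T i x₀ := by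
                rw [P2 i x₀ (by omega), hv, if_neg (fun hh => by omega)]
              have f2 : T' i n = T i n := by rw [P3 i hij, e2]
              have hb' := hT'bal i x₀ n hi hij hjk hkn
              simp only [LBal, min_le_iff, le_max_iff] at hb'
              rw [f1, f2] at hb'
              omega
          · have e2 : T'' j n = T j n := by rw [hv, if_neg (fun hh => hjx hh.1)]
            have e3 : T'' i n = T i n := by rw [hv, if_neg (fun hh => hix hh.1)]
            have hb0 := hTbal i j n hi hij hjk hkn
            simp only [LBal] at hb0 ⊢
            rw [e1, e2, e3]; exact hb0
      · have e2 : T'' j k = T j k := by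
          rw [hv, if_neg]; rintro ⟨rfl, rfl⟩; exact hk rfl
        have e3 : T'' i k = T i k := by
          rw [hv, if_neg]; rintro ⟨rfl, rfl⟩; exact hk rfl
        simp only [LBal]
        rw [e1, e2, e3]; exact hTbal i j k hi hij hjk hkn
    · -- row bound
      intro i j
      rw [hv]
      split_ifs with h
      · obtain ⟨rfl, rfl⟩ := h; exact hbx
      · exact hTrow i j
end
end
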